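/- arXiv:2201.12201 — 6 statements merged into one kernel-verified Lean document; each statement's English description precedes it below -/
import Mathlib

section
/- For vectors v₁,…,v_ℓ in a real inner product space H and an orthogonal projection P on H, the Gram determinant satisfies G(P v₁,…,P v_ℓ) ≤ G(v₁,…,v_ℓ). -/
open Matrix in
lemma gram_posSemidef {H : Type*} [NormedAddCommGroup H] [InnerProductSpace ℝ H]
    {n : ℕ} (w : Fin n → H) :
    (Matrix.of fun i j : Fin n => (inner ℝ (w i) (w j) : ℝ)).PosSemidef := by
  rw [Matrix.posSemidef_iff_dotProduct_mulVec]
  constructor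
  · ext i j
    simp [Matrix.conjTranspose, real_inner_comm]
  · intro x
    have : star x ⬝ᵥ ((Matrix.of fun i j : Fin n => (inner ℝ (w i) (w j) : ℝ)) *ᵥ x)
        = (inner ℝ (∑ i, x i • w i) (∑ j, x j • w j) : ℝ) := by
      simp only [sum_inner, inner_sum]
      simp [dotProduct, Matrix.mulVec, inner_sum, sum_inner, real_inner_smul_left,
        real_inner_smul_right, Finset.mul_sum, mul_assoc]
      exact Finset.sum_congr rfl fun i _ => Finset.sum_congr rfl fun j _ => by
        rw [real_inner_comm]; ring
    rw [this]
    exact real_inner_self_nonneg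

open Matrix in
lemma det_le_one_of_psd {n : ℕ} {M : Matrix (Fin n) (Fin n) ℝ}
    (hM : M.PosSemidef) (h1 : (1 - M).PosSemidef) : M.det ≤ 1 := by
  have hdet : M.det = ∏ i, hM.1.eigenvalues i := by
    simpa using hM.1.det_eq_prod_eigenvalues
  rw [hdet]
  refine Finset.prod_le_one (fun i _ => hM.eigenvalues_nonneg i) (fun i _ => ?_)
  set u : Fin n → ℝ := ⇑(hM.1.eigenvectorBasis i) with hu
  have huu : u ⬝ᵥ u = 1 := by
    have hnorm : ‖hM.1.eigenvectorBasis i‖ = 1 := hM.1.eigenvectorBasis.orthonormal.1 i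
    have : (inner ℝ (hM.1.eigenvectorBasis i) (hM.1.eigenvectorBasis i) : ℝ) = 1 := by
      rw [real_inner_self_eq_norm_sq, hnorm]; norm_num
    rw [← this, EuclideanSpace.inner_eq_star_dotProduct, star_trivial]
  have heig : hM.1.eigenvalues i = u ⬝ᵥ (M *ᵥ u) := by
    simpa using hM.1.eigenvalues_eq i
  have h2 := h1.dotProduct_mulVec_nonneg u
  rw [show star u = u from star_trivial u] at h2
  have : u ⬝ᵥ ((1 - M) *ᵥ u) = u ⬝ᵥ u - u ⬝ᵥ (M *ᵥ u) := by
    simp [Matrix.sub_mulVec, dotProduct_sub]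
  rw [this, huu] at h2
  linarith [heig ▸ h2]

open Matrix MatrixOrder in
lemma det_le_det_of_psd {n : ℕ} {A B : Matrix (Fin n) (Fin n) ℝ}
    (hA : A.PosSemidef) (hBA : (B - A).PosSemidef) : A.det ≤ B.det := by
  have hB : B.PosSemidef := by simpa using hA.add hBA
  by_cases hdB : IsUnit B.det
  · set S := CFC.sqrt B with hS
    have hSpsd : S.PosSemidef := (CFC.sqrt_nonneg B).posSemidef
    have hSS : S * S = B := CFC.sqrt_mul_sqrt_self B hB.nonneg
    have hdS : IsUnit S.det := by
      have : S.det * S.det = B.det := by rw [← Matrix.det_mul, hSS]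
      exact isUnit_of_mul_isUnit_left (this ▸ hdB)
    have hST : S * S⁻¹ = 1 := Matrix.mul_nonsing_inv S hdS
    have hTS : S⁻¹ * S = 1 := Matrix.nonsing_inv_mul S hdS
    set T := S⁻¹ with hT
    have hTherm : Tᴴ = T := by
      rw [hT, Matrix.conjTranspose_nonsing_inv, hSpsd.1]
    set M := T * A * T with hM
    have hMpsd : M.PosSemidef := by
      have := hA.mul_mul_conjTranspose_same T
      rwa [hTherm] at this
    have hTBT : T * B * T = 1 := by
      rw [← hSS, ← Matrix.mul_assoc, Matrix.mul_assoc (T * S), hST, Matrix.mul_one, hTS]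
    have h1M : (1 - M).PosSemidef := by
      have := hBA.mul_mul_conjTranspose_same T
      rw [hTherm] at this
      have heq : T * (B - A) * T = 1 - M := by
        rw [Matrix.mul_sub, Matrix.sub_mul, hTBT, hM]
      rwa [heq] at this
    have hdetM : M.det ≤ 1 := det_le_one_of_psd hMpsd h1M
    have hAM : A.det = B.det * M.det := by
      have : S * M * S = A := by
        rw [hM, ← Matrix.mul_assoc, ← Matrix.mul_assoc, hST, Matrix.one_mul,
          Matrix.mul_assoc, hTS, Matrix.mul_one]
      rw [← this, ← hSS]
      simp only [Matrix.det_mul]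
      ring
    have hBd : 0 ≤ B.det := by
      rw [← hSS, Matrix.det_mul]
      exact mul_self_nonneg _
    rw [hAM]
    nlinarith
  · have hdB0 : B.det = 0 := by
      by_contra h; exact hdB (Ne.isUnit h)
    obtain ⟨x, hx0, hBx⟩ := (Matrix.exists_mulVec_eq_zero_iff.mpr hdB0)
    have hAx : A *ᵥ x = 0 := by
      rw [← hA.dotProduct_mulVec_zero_iff x]
      have h1 : star x ⬝ᵥ ((B - A) *ᵥ x) ≥ 0 := hBA.dotProduct_mulVec_nonneg x
      have h2 : star x ⬝ᵥ (A *ᵥ x) ≥ 0 := hA.dotProduct_mulVec_nonneg x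
      have h3 : star x ⬝ᵥ ((B - A) *ᵥ x) = star x ⬝ᵥ (B *ᵥ x) - star x ⬝ᵥ (A *ᵥ x) := by
        simp [Matrix.sub_mulVec, dotProduct_sub]
      rw [h3, hBx, dotProduct_zero] at h1
      linarith
    have hdA0 : A.det = 0 := Matrix.exists_mulVec_eq_zero_iff.mp ⟨x, hx0, hAx⟩
    rw [hdA0, hdB0]

/-- Gram determinants do not increase under orthogonal projection: if `P` is an
orthogonal projection (idempotent and self-adjoint linear map) on a real inner product
space, then `G(P v₁,…,P v_ℓ) ≤ G(v₁,…,v_ℓ)`. -/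
theorem stmt5 {H : Type*} [NormedAddCommGroup H] [InnerProductSpace ℝ H]
    (ℓ : ℕ) (v : Fin ℓ → H) (P : H →ₗ[ℝ] H)
    (hidem : ∀ x, P (P x) = P x)
    (hsa : ∀ x y, (inner ℝ (P x) y : ℝ) = inner ℝ x (P y)) :
    Matrix.det (Matrix.of fun i j : Fin ℓ => (inner ℝ (P (v i)) (P (v j)) : ℝ)) ≤
      Matrix.det (Matrix.of fun i j : Fin ℓ => (inner ℝ (v i) (v j) : ℝ)) := by
  have hA := gram_posSemidef (fun i => P (v i))
  have hdiff : (Matrix.of fun i j : Fin ℓ => (inner ℝ (v i) (v j) : ℝ))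
      - (Matrix.of fun i j : Fin ℓ => (inner ℝ (P (v i)) (P (v j)) : ℝ))
      = Matrix.of fun i j : Fin ℓ => (inner ℝ (v i - P (v i)) (v j - P (v j)) : ℝ) := by
    ext i j
    have h1 : (inner ℝ (P (v i)) (P (v j)) : ℝ) = inner ℝ (v i) (P (v j)) := by
      rw [hsa, hidem]
    have h2 : (inner ℝ (P (v i)) (v j) : ℝ) = inner ℝ (v i) (P (v j)) := hsa _ _
    simp only [Matrix.sub_apply, Matrix.of_apply, inner_sub_left, inner_sub_right, h1, h2]
    ring
  have hBA := hdiff ▸ gram_posSemidef (fun i => v i - P (v i))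
  exact det_le_det_of_psd hA hBA
end

section
/- If u₁,…,u_ℓ, v₁,…,v_{ℓ'} are vectors in a real inner product space and P is the orthogonal projection onto the orthogonal complement of the span of u₁,…,u_ℓ, then the Gram determinant factors as G(u₁,…,u_ℓ, v₁,…,v_{ℓ'}) = G(u₁,…,u_ℓ) · G(P v₁,…,P v_{ℓ'}). -/
/-- The Gram determinant of vectors in a real inner product space. -/
noncomputable def gram {H : Type*} [NormedAddCommGroup H] [InnerProductSpace ℝ H]
    {m : ℕ} (v : Fin m → H) : ℝ :=
  Matrix.det (Matrix.of fun i j : Fin m => (inner ℝ (v i) (v j) : ℝ))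

/-- Factorization of Gram determinants: if `P` is the orthogonal projection onto the
orthogonal complement of `span{u₁,…,u_ℓ}` (characterized by `x − Px ∈ span u` and
`Px ⟂ span u`), then `G(u₁,…,u_ℓ,v₁,…,v_{ℓ'}) = G(u₁,…,u_ℓ) · G(P v₁,…,P v_{ℓ'})`. -/
theorem stmt7 {H : Type*} [NormedAddCommGroup H] [InnerProductSpace ℝ H]
    (ℓ ℓ' : ℕ) (u : Fin ℓ → H) (v : Fin ℓ' → H) (P : H →ₗ[ℝ] H)
    (hP1 : ∀ x, x - P x ∈ Submodule.span ℝ (Set.range u))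
    (hP2 : ∀ x, ∀ w ∈ Submodule.span ℝ (Set.range u), (inner ℝ (P x) w : ℝ) = 0) :
    gram (Fin.append u v) = gram u * gram (fun i => P (v i)) := by
  classical
  have hw : ∀ j, ∃ c : Fin ℓ → ℝ, ∑ i, c i • u i = v j - P (v j) := fun j =>
    (Submodule.mem_span_range_iff_exists_fun ℝ).mp (hP1 (v j))
  choose c hc using hw
  have hv : ∀ j, v j = P (v j) + ∑ i, c j i • u i := by
    intro j; rw [hc j]; abel
  have hu_mem : ∀ i, u i ∈ Submodule.span ℝ (Set.range u) := fun i =>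
    Submodule.subset_span ⟨i, rfl⟩
  have h0 : ∀ (x : H) (i : Fin ℓ), (inner ℝ (u i) (P x) : ℝ) = 0 := fun x i => by
    rw [real_inner_comm]; exact hP2 x (u i) (hu_mem i)
  have h0' : ∀ (x : H) (i : Fin ℓ), (inner ℝ (P x) (u i) : ℝ) = 0 := fun x i =>
    hP2 x (u i) (hu_mem i)
  set A : Matrix (Fin ℓ) (Fin ℓ) ℝ := Matrix.of fun i j => (inner ℝ (u i) (u j) : ℝ) with hA
  set Gp : Matrix (Fin ℓ') (Fin ℓ') ℝ :=
    Matrix.of fun i j => (inner ℝ (P (v i)) (P (v j)) : ℝ) with hGp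
  set C : Matrix (Fin ℓ) (Fin ℓ') ℝ := Matrix.of fun i j => c j i with hC
  set M : Matrix (Fin (ℓ + ℓ')) (Fin (ℓ + ℓ')) ℝ :=
    Matrix.of fun i j => (inner ℝ (Fin.append u v i) (Fin.append u v j) : ℝ) with hM
  have key : M.submatrix finSumFinEquiv finSumFinEquiv
      = Matrix.fromBlocks A (A * C) (C.transpose * A) (C.transpose * A * C + Gp) := by
    ext i j
    cases i with
    | inl i =>
      cases j with
      | inl j =>
        simp [hM, hA, Matrix.submatrix_apply, finSumFinEquiv_apply_left, Fin.append_left]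
      | inr j =>
        simp only [hM, Matrix.submatrix_apply, finSumFinEquiv_apply_left,
          finSumFinEquiv_apply_right, Matrix.of_apply, Fin.append_left, Fin.append_right,
          Matrix.fromBlocks_apply₁₂]
        rw [hv j]
        simp [Matrix.mul_apply, hA, hC, inner_add_right, h0, inner_sum, inner_smul_right,
          mul_comm]
    | inr i =>
      cases j with
      | inl j =>
        simp only [hM, Matrix.submatrix_apply, finSumFinEquiv_apply_left,
          finSumFinEquiv_apply_right, Matrix.of_apply, Fin.append_left, Fin.append_right,
          Matrix.fromBlocks_apply₂₁]
        rw [hv i]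
        simp [Matrix.mul_apply, hA, hC, Matrix.transpose_apply, inner_add_left, h0',
          sum_inner, inner_smul_left, mul_comm]
      | inr j =>
        simp only [hM, Matrix.submatrix_apply, finSumFinEquiv_apply_right, Matrix.of_apply,
          Fin.append_right, Matrix.fromBlocks_apply₂₂, Matrix.add_apply]
        rw [hv i, hv j]
        simp only [inner_add_left, inner_add_right, sum_inner, inner_sum, inner_smul_left,
          inner_smul_right, h0, h0', mul_zero, Finset.sum_const_zero, add_zero, zero_add,
          RCLike.conj_to_real]
        simp only [Matrix.mul_apply, hA, hC, hGp, Matrix.transpose_apply, Matrix.of_apply,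
          Finset.sum_mul, Finset.mul_sum]
        rw [add_comm]
        congr 1
        apply Finset.sum_congr rfl; intro k _
        apply Finset.sum_congr rfl; intro l _
        rw [real_inner_comm]
        ring
  have hfact : Matrix.fromBlocks A (A * C) (C.transpose * A) (C.transpose * A * C + Gp)
      = Matrix.fromBlocks 1 0 C.transpose 1 * Matrix.fromBlocks A (A * C) 0 Gp := by
    rw [Matrix.fromBlocks_multiply]
    congr 1 <;> simp [Matrix.mul_assoc]
  have hdet : M.det = A.det * Gp.det := by
    rw [← Matrix.det_submatrix_equiv_self finSumFinEquiv M, key, hfact, Matrix.det_mul,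
      Matrix.det_fromBlocks_zero₁₂, Matrix.det_fromBlocks_zero₂₁, Matrix.det_one,
      Matrix.det_one, one_mul, one_mul]
  simpa [gram, hM, hA, hGp] using hdet
end

section
/- For vectors v₁,…,v_n in a real inner product space with indices interpreted cyclically (v_{n+1} = v₁ etc.), define I_ℓ := ∏_{j=1}^n G(v_j, v_{j+1},…, v_{j+ℓ−1}) for ℓ ∈ {1,…,n}. Then the sequence (I₁,…,I_n) is log-concave: I_ℓ² ≥ I_{ℓ−1} · I_{ℓ+1} for every ℓ ∈ {2,…,n−1}. -/
section GramAux

open Finset Submodule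

variable {H : Type*} [NormedAddCommGroup H] [InnerProductSpace ℝ H]

noncomputable def gramMat {k : ℕ} (w : Fin k → H) : Matrix (Fin k) (Fin k) ℝ :=
  Matrix.of fun a b => (inner ℝ (w a) (w b) : ℝ)

lemma gramMat_posSemidef {k : ℕ} (w : Fin k → H) : (gramMat w).PosSemidef := by
  rw [Matrix.posSemidef_iff_dotProduct_mulVec]
  constructor
  · ext i j
    simp [gramMat, Matrix.conjTranspose_apply, real_inner_comm]
  · intro x
    have : dotProduct (star x) ((gramMat w).mulVec x)
        = (inner ℝ (∑ i, x i • w i) (∑ j, x j • w j) : ℝ) := by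
      simp only [dotProduct, Matrix.mulVec, dotProduct, gramMat, Matrix.of_apply,
        sum_inner, inner_sum, real_inner_smul_left, real_inner_smul_right, star_trivial]
      rw [Finset.sum_comm]
      congr 1; ext i; rw [Finset.mul_sum]; congr 1; ext j; ring
    rw [this]
    exact real_inner_self_nonneg

lemma gramMat_det_nonneg {k : ℕ} (w : Fin k → H) : 0 ≤ (gramMat w).det := by
  exact (gramMat_posSemidef w).det_nonneg

lemma gramMat_det_comp_equiv {k : ℕ} (w : Fin k → H) (e : Fin k ≃ Fin k) :
    (gramMat (w ∘ e)).det = (gramMat w).det := by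
  have : gramMat (w ∘ e) = (gramMat w).submatrix e e := rfl
  rw [this, Matrix.det_submatrix_equiv_self]

lemma gramMat_det_snoc_of_mem {k : ℕ} (w : Fin k → H) (p : H)
    (hp : p ∈ Submodule.span ℝ (Set.range w)) : (gramMat (Fin.snoc w p)).det = 0 := by
  obtain ⟨c, hc⟩ := (mem_span_range_iff_exists_fun ℝ).mp hp
  set M := gramMat (Fin.snoc w p) with hM
  set c' : Fin (k + 1) → ℝ := Fin.snoc c 0 with hc'
  have hrow : (∑ i, c' i • M i) = M (Fin.last k) := by
    funext j
    set y : H := (Fin.snoc w p : Fin (k+1) → H) j with hy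
    have : ∀ i : Fin k, M (Fin.castSucc i) j = (inner ℝ (w i) ((Fin.snoc w p : Fin (k+1) → H) j) : ℝ) := by
      intro i; simp [M, gramMat]
    simp only [Finset.sum_apply, Pi.smul_apply, smul_eq_mul, Fin.sum_univ_castSucc,
      hc', Fin.snoc_castSucc, Fin.snoc_last, zero_mul, add_zero]
    have hMl : M (Fin.last k) j = (inner ℝ p ((Fin.snoc w p : Fin (k+1) → H) j) : ℝ) := by simp [M, gramMat]
    rw [hMl]
    have : ∀ i : Fin k, M (Fin.castSucc i) j = (inner ℝ (w i) y : ℝ) := this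
    calc ∑ i : Fin k, c i * M (Fin.castSucc i) j = ∑ i : Fin k, c i * (inner ℝ (w i) y : ℝ) :=
          Finset.sum_congr rfl fun i _ => by rw [this i]
      _ = (inner ℝ p y : ℝ) := by rw [← hc, sum_inner]; simp [real_inner_smul_left]
  have h0 : (M.updateRow (Fin.last k) (∑ i, c' i • M i)).det = c' (Fin.last k) • M.det :=
    Matrix.det_updateRow_sum M (Fin.last k) c'
  rw [hrow, Matrix.updateRow_eq_self] at h0
  rw [h0]
  simp [hc']

lemma gramMat_det_snoc {k : ℕ} (w : Fin k → H) (a : H) :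
    haveI : FiniteDimensional ℝ (span ℝ (Set.range w)) :=
      FiniteDimensional.span_of_finite ℝ (Set.finite_range w)
    (gramMat (Fin.snoc w a)).det =
      (gramMat w).det *
        ‖a - (orthogonalProjection (span ℝ (Set.range w)) a : H)‖ ^ 2 := by
  haveI : FiniteDimensional ℝ (span ℝ (Set.range w)) :=
    FiniteDimensional.span_of_finite ℝ (Set.finite_range w)
  set K := span ℝ (Set.range w) with hK
  set p : H := (orthogonalProjection K a : H) with hp
  set q : H := a - p with hq
  have hpK : p ∈ K := (orthogonalProjection K a).2
  have hqK : q ∈ Kᗮ := sub_starProjection_mem_orthogonal a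
  have hwK : ∀ i, w i ∈ K := fun i => subset_span (Set.mem_range_self i)
  have hqw : ∀ i, (inner ℝ q (w i) : ℝ) = 0 := fun i =>
    (Submodule.mem_orthogonal' K q).mp hqK (w i) (hwK i)
  have hwq : ∀ i, (inner ℝ (w i) q : ℝ) = 0 := fun i => hqK (w i) (hwK i)
  have hpq : (inner ℝ p q : ℝ) = 0 := hqK p hpK
  have haw : ∀ i, (inner ℝ a (w i) : ℝ) = (inner ℝ p (w i) : ℝ) := by
    intro i
    have : a = p + q := by rw [hq]; abel
    rw [this, inner_add_left, hqw i, add_zero]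
  have hwa : ∀ i, (inner ℝ (w i) a : ℝ) = (inner ℝ (w i) p : ℝ) := by
    intro i
    have : a = p + q := by rw [hq]; abel
    rw [this, inner_add_right, hwq i, add_zero]
  have haa : (inner ℝ a a : ℝ) = (inner ℝ p p : ℝ) + ‖q‖ ^ 2 := by
    have h1 : a = p + q := by rw [hq]; abel
    have h2 : (inner ℝ q p : ℝ) = 0 := by rw [real_inner_comm]; exact hpq
    rw [h1, inner_add_add_self, hpq, h2]
    simp [real_inner_self_eq_norm_sq]
  set N := gramMat (Fin.snoc w p) with hN
  set e₀ : Fin (k + 1) → ℝ := Pi.single (Fin.last k) 1 with he₀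
  -- M equals N with last column updated
  have hMN : gramMat (Fin.snoc w a) =
      N.updateCol (Fin.last k)
        (fun i => N i (Fin.last k) + ‖q‖ ^ 2 * e₀ i) := by
    ext i j
    rcases eq_or_ne j (Fin.last k) with rfl | hj
    · rw [Matrix.updateCol_self]
      rcases eq_or_ne i (Fin.last k) with rfl | hi
      · simp [gramMat, N, haa, he₀]
        simpa using haa
      · obtain ⟨i', rfl⟩ := Fin.exists_castSucc_eq.2 hi
        simp [gramMat, N, hwa, e₀, Pi.single_eq_of_ne (Fin.castSucc_lt_last i').ne]
    · rw [Matrix.updateCol_ne hj]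
      obtain ⟨j', rfl⟩ := Fin.exists_castSucc_eq.2 hj
      rcases eq_or_ne i (Fin.last k) with rfl | hi
      · simp [gramMat, N, haw]
      · obtain ⟨i', rfl⟩ := Fin.exists_castSucc_eq.2 hi
        simp [gramMat, N]
  have hNdet : N.det = 0 := gramMat_det_snoc_of_mem w p hpK
  have hE : (N.updateCol (Fin.last k) (e₀)).det =
      (gramMat w).det := by
    rw [Matrix.det_succ_column _ (Fin.last k)]
    rw [Finset.sum_eq_single (Fin.last k)]
    · have h1 : (N.updateCol (Fin.last k) (e₀))
          (Fin.last k) (Fin.last k) = 1 := by simp [he₀]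
      have h2 : ((N.updateCol (Fin.last k) (e₀)).submatrix
          (Fin.last k).succAbove (Fin.last k).succAbove) = gramMat w := by
        ext i j
        simp [Fin.succAbove_last, Matrix.updateCol_ne (Fin.castSucc_lt_last j).ne,
          N, gramMat]
      rw [h1, h2]
      have : ((Fin.last k : ℕ) + (Fin.last k : ℕ)) = 2 * k := by simp [Fin.val_last]; ring
      rw [this]
      simp [pow_mul]
    · intro i _ hi
      have : (N.updateCol (Fin.last k) (e₀)) i (Fin.last k)
          = 0 := by simp [e₀, Pi.single_eq_of_ne hi]
      rw [this]; ring
    · intro h; exact absurd (Finset.mem_univ _) h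
  have hsplit : (fun i => N i (Fin.last k) + ‖q‖ ^ 2 * e₀ i)
      = (fun i => N i (Fin.last k)) + (‖q‖ ^ 2) • e₀ := by
    funext i; simp
  rw [hMN, hsplit, Matrix.det_updateCol_add, Matrix.updateCol_eq_self, hNdet,
    Matrix.det_updateCol_smul, hE]
  ring

lemma gramMat_det_cons {k : ℕ} (w : Fin k → H) (a : H) :
    haveI : FiniteDimensional ℝ (span ℝ (Set.range w)) :=
      FiniteDimensional.span_of_finite ℝ (Set.finite_range w)
    (gramMat (Fin.cons a w)).det =
      (gramMat w).det *
        ‖a - (orthogonalProjection (span ℝ (Set.range w)) a : H)‖ ^ 2 := by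
  haveI : FiniteDimensional ℝ (span ℝ (Set.range w)) :=
    FiniteDimensional.span_of_finite ℝ (Set.finite_range w)
  have h  : (Fin.snoc w a : Fin (k+1) → H)
      = (Fin.cons a w : Fin (k+1) → H) ∘ (finRotate (k+1)) := by
    rw [Fin.snoc_eq_cons_rotate]; rfl
  rw [← gramMat_det_snoc w a, h, gramMat_det_comp_equiv]

lemma gram_key {k : ℕ} (w : Fin k → H) (a b : H) :
    (gramMat w).det * (gramMat (Fin.cons a (Fin.snoc w b))).det ≤
      (gramMat (Fin.cons a w)).det * (gramMat (Fin.snoc w b)).det := by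
  haveI : FiniteDimensional ℝ (span ℝ (Set.range w)) :=
    FiniteDimensional.span_of_finite ℝ (Set.finite_range w)
  haveI : FiniteDimensional ℝ (span ℝ (Set.range (Fin.snoc w b : Fin (k+1) → H))) :=
    FiniteDimensional.span_of_finite ℝ (Set.finite_range _)
  set K := span ℝ (Set.range w) with hK
  set K' := span ℝ (Set.range (Fin.snoc w b : Fin (k+1) → H)) with hK'
  have hKK' : K ≤ K' := by
    apply span_mono
    rintro x ⟨i, rfl⟩
    exact ⟨Fin.castSucc i, by simp⟩
  have hdist : ‖a - (orthogonalProjection K' a : H)‖ ≤ ‖a - (orthogonalProjection K a : H)‖ := by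
    rw [show ‖a - (orthogonalProjection K' a : H)‖ = ⨅ x : K', ‖a - (x : H)‖ from starProjection_minimal a]
    have hbdd : BddBelow (Set.range fun x : K' => ‖a - (x : H)‖) := by
      refine ⟨0, ?_⟩
      rintro y ⟨x, rfl⟩
      exact norm_nonneg _
    have := ciInf_le hbdd (⟨(orthogonalProjection K a : H), hKK' (orthogonalProjection K a).2⟩ : K')
    simpa using this
  rw [gramMat_det_cons, gramMat_det_cons, gramMat_det_snoc]
  have h1 : 0 ≤ (gramMat w).det := gramMat_det_nonneg w
  have h2 : 0 ≤ (gramMat (Fin.snoc w b)).det := gramMat_det_nonneg _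
  have h3 : ‖a - (orthogonalProjection K' a : H)‖ ^ 2
      ≤ ‖a - (orthogonalProjection K a : H)‖ ^ 2 :=
    pow_le_pow_left₀ (norm_nonneg _) hdist 2
  have h4 : (0:ℝ) ≤ (gramMat w).det * ((gramMat w).det *
      ‖b - (orthogonalProjection (span ℝ (Set.range w)) b : H)‖ ^ 2) :=
    mul_nonneg h1 (mul_nonneg h1 (sq_nonneg _))
  nlinarith [mul_le_mul_of_nonneg_left h3 h4]

end GramAux

/-- The cyclic product `I_ℓ = ∏_{j=1}^n G(v_j, v_{j+1}, …, v_{j+ℓ-1})` of Gram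
determinants of `ℓ` cyclically consecutive vectors among `v₁,…,v_n` (indices mod `n`). -/
noncomputable def Icyc {H : Type*} [NormedAddCommGroup H] [InnerProductSpace ℝ H]
    {n : ℕ} [NeZero n] (v : ZMod n → H) (ℓ : ℕ) : ℝ :=
  ∏ j : ZMod n,
    Matrix.det (Matrix.of fun a b : Fin ℓ =>
      (inner ℝ (v (j + ((a : ℕ) : ZMod n))) (v (j + ((b : ℕ) : ZMod n))) : ℝ))

/-- Log-concavity of the cyclic Gram products: `I_ℓ² ≥ I_{ℓ-1} · I_{ℓ+1}` for
`2 ≤ ℓ ≤ n − 1`. -/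
theorem stmt10 {H : Type*} [NormedAddCommGroup H] [InnerProductSpace ℝ H]
    (n : ℕ) [NeZero n] (v : ZMod n → H) (ℓ : ℕ) (h2 : 2 ≤ ℓ) (hn : ℓ ≤ n - 1) :
    Icyc v (ℓ - 1) * Icyc v (ℓ + 1) ≤ (Icyc v ℓ) ^ 2 := by
  obtain ⟨k, rfl⟩ : ∃ k, ℓ = k + 1 := ⟨ℓ - 1, by omega⟩
  simp only [Nat.add_sub_cancel]
  have hIcyc : ∀ m : ℕ, Icyc v m = ∏ j : ZMod n,
      (gramMat (fun a : Fin m => v (j + ((a : ℕ) : ZMod n)))).det := fun m => rfl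
  set w : ZMod n → Fin k → H := fun j a => v (j + 1 + ((a : ℕ) : ZMod n)) with hw
  set bb : ZMod n → H := fun j => v (j + 1 + ((k : ℕ) : ZMod n)) with hbb
  have hshift : ∀ f : ZMod n → ℝ, ∏ j : ZMod n, f (j + 1) = ∏ j : ZMod n, f j := fun f =>
    Fintype.prod_equiv (Equiv.addRight (1 : ZMod n)) _ _ (fun j => rfl)
  have hB : ∀ j : ZMod n, (fun a : Fin (k + 1) => v (j + ((a : ℕ) : ZMod n)))
      = Fin.cons (v j) (w j) := by
    intro j; funext i
    refine Fin.cases ?_ ?_ i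
    · simp
    · intro i
      rw [Fin.cons_succ, hw]
      congr 1
      simp only [Fin.val_succ]
      push_cast
      ring
  have hC : ∀ j : ZMod n, (fun a : Fin (k + 1) => v ((j + 1) + ((a : ℕ) : ZMod n)))
      = Fin.snoc (w j) (bb j) := by
    intro j; funext i
    refine Fin.lastCases ?_ ?_ i
    · rw [Fin.snoc_last, hbb]
      simp [Fin.val_last]
    · intro i
      rw [Fin.snoc_castSucc, hw]
      simp [Fin.coe_castSucc]
  have hD : ∀ j : ZMod n, (fun a : Fin (k + 2) => v (j + ((a : ℕ) : ZMod n)))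
      = Fin.cons (v j) (Fin.snoc (w j) (bb j)) := by
    intro j; funext i
    refine Fin.cases ?_ ?_ i
    · simp
    · intro i
      rw [Fin.cons_succ]
      refine Fin.lastCases ?_ ?_ i
      · rw [Fin.snoc_last, hbb]
        congr 1
        simp only [Fin.val_succ, Fin.val_last]
        push_cast
        ring
      · intro i
        rw [Fin.snoc_castSucc, hw]
        congr 1
        simp only [Fin.val_succ, Fin.coe_castSucc]
        push_cast
        ring
  have e1 : Icyc v k = ∏ j : ZMod n, (gramMat (w j)).det := by
    rw [hIcyc k,
      ← hshift (fun j => (gramMat (fun a : Fin k => v (j + ((a : ℕ) : ZMod n)))).det)]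
  have e2 : Icyc v (k + 1) = ∏ j : ZMod n, (gramMat (Fin.cons (v j) (w j))).det := by
    rw [hIcyc]
    exact Finset.prod_congr rfl fun j _ => by rw [hB j]
  have e3 : Icyc v (k + 1) = ∏ j : ZMod n, (gramMat (Fin.snoc (w j) (bb j))).det := by
    rw [hIcyc,
      ← hshift (fun j => (gramMat (fun a : Fin (k+1) => v (j + ((a : ℕ) : ZMod n)))).det)]
    exact Finset.prod_congr rfl fun j _ => by rw [← hC j]
  have e4 : Icyc v (k + 2) = ∏ j : ZMod n,
      (gramMat (Fin.cons (v j) (Fin.snoc (w j) (bb j)))).det := by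
    rw [hIcyc]
    exact Finset.prod_congr rfl fun j _ => by rw [hD j]
  have esq : (Icyc v (k + 1)) ^ 2 = (∏ j : ZMod n, (gramMat (Fin.cons (v j) (w j))).det)
      * (∏ j : ZMod n, (gramMat (Fin.snoc (w j) (bb j))).det) := by
    rw [sq]
    nth_rewrite 1 [e2]
    rw [e3]
  rw [e1, e4, esq, ← Finset.prod_mul_distrib, ← Finset.prod_mul_distrib]
  refine Finset.prod_le_prod (fun j _ => ?_) (fun j _ => ?_)
  · exact mul_nonneg (gramMat_det_nonneg _) (gramMat_det_nonneg _)
  · exact gram_key (w j) (v j) (bb j)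
end

section
/- Let ‖·‖_μ be a norm on ℝⁿ whose unit ball K is compact with nonempty interior, and let (u₁,…,u_n) ∈ Kⁿ maximize |det(u₁,…,u_n)|. Let u₁*,…,u_n* be the dual basis (u_i*·u_j = δ_{ij}). Then for all v ∈ ℝⁿ: max_{i} |u_i*·v| ≤ ‖v‖_μ ≤ ∑_{i=1}^n |u_i*·v|. Consequently, (2ⁿ/n!)|det(u₁,…,u_n)| ≤ |K| ≤ 2ⁿ|det(u₁,…,u_n)|. -/
open MeasureTheory

/-- John-type position via a maximal-volume inscribed parallelepiped: let `N` be a norm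
on `ℝⁿ` whose unit ball `K = {u : N u ≤ 1}` is compact with nonempty interior, let
`(u₁,…,u_n) ∈ Kⁿ` maximize `|det(u₁,…,u_n)|`, and let `u₁*,…,u_n*` be the dual basis
(`⟨u_i*, u_j⟩ = δ_{ij}`). Then for all `v`,
`max_i |⟨u_i*, v⟩| ≤ N v ≤ ∑_i |⟨u_i*, v⟩|`, and consequently
`(2ⁿ/n!)|det(u₁,…,u_n)| ≤ |K| ≤ 2ⁿ|det(u₁,…,u_n)|`. -/
theorem stmt14 (n : ℕ) (N : EuclideanSpace ℝ (Fin n) → ℝ)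
    (hN0 : ∀ u, 0 ≤ N u)
    (hNdef : ∀ u, N u = 0 ↔ u = 0)
    (hNhom : ∀ (c : ℝ) u, N (c • u) = |c| * N u)
    (hNtri : ∀ u v, N (u + v) ≤ N u + N v)
    (hKc : IsCompact {u : EuclideanSpace ℝ (Fin n) | N u ≤ 1})
    (hKint : (interior {u : EuclideanSpace ℝ (Fin n) | N u ≤ 1}).Nonempty)
    (u : Fin n → EuclideanSpace ℝ (Fin n))
    (humem : ∀ i, N (u i) ≤ 1)
    (humax : ∀ w : Fin n → EuclideanSpace ℝ (Fin n), (∀ i, N (w i) ≤ 1) →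
      |Matrix.det (Matrix.of fun a b : Fin n => w b a)| ≤
        |Matrix.det (Matrix.of fun a b : Fin n => u b a)|)
    (ustar : Fin n → EuclideanSpace ℝ (Fin n))
    (hdual : ∀ i j, (inner ℝ (ustar i) (u j) : ℝ) = if i = j then 1 else 0) :
    (∀ v : EuclideanSpace ℝ (Fin n),
      (⨆ i : Fin n, |(inner ℝ (ustar i) v : ℝ)|) ≤ N v ∧
        N v ≤ ∑ i : Fin n, |(inner ℝ (ustar i) v : ℝ)|) ∧
    (2 ^ n / (Nat.factorial n : ℝ)) * |Matrix.det (Matrix.of fun a b : Fin n => u b a)| ≤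
      (volume {u : EuclideanSpace ℝ (Fin n) | N u ≤ 1}).toReal ∧
    (volume {u : EuclideanSpace ℝ (Fin n) | N u ≤ 1}).toReal ≤
      2 ^ n * |Matrix.det (Matrix.of fun a b : Fin n => u b a)| := by
  classical
  set M : Matrix (Fin n) (Fin n) ℝ := Matrix.of fun a b : Fin n => u b a with hMdef
  have hN0' : N 0 = 0 := (hNdef 0).mpr rfl
  -- pointwise evaluation of sums of PiLp elements
  have hsum_apply : ∀ (c : Fin n → ℝ) (w : Fin n → EuclideanSpace ℝ (Fin n)) (k : Fin n),
      (∑ j, c j • w j) k = ∑ j, c j * w j k := by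
    intro c w k
    show (WithLp.linearEquiv 2 ℝ (Fin n → ℝ)) (∑ j, c j • w j) k = _
    rw [map_sum]
    simp_rw [_root_.map_smul]
    simp [Finset.sum_apply, WithLp.linearEquiv_apply]
  -- linear independence
  have hli : LinearIndependent ℝ u := by
    rw [Fintype.linearIndependent_iff]
    intro g hg i
    have h : (inner ℝ (ustar i) (∑ j, g j • u j) : ℝ) = 0 := by rw [hg, inner_zero_right]
    rw [inner_sum] at h
    simp_rw [real_inner_smul_right, hdual, mul_ite, mul_one, mul_zero,
      Finset.sum_ite_eq, Finset.mem_univ, if_true] at h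
    exact h
  -- representation in the (dual) basis
  have hrep : ∀ v : EuclideanSpace ℝ (Fin n), v = ∑ i, (inner ℝ (ustar i) v : ℝ) • u i := by
    rcases Nat.eq_zero_or_pos n with hn | hn
    · subst hn
      intro v
      have : Subsingleton (EuclideanSpace ℝ (Fin 0)) :=
        (Module.finrank_zero_iff (R := ℝ)).mp (by simp)
      simp [Subsingleton.elim v 0]
    have : Nonempty (Fin n) := ⟨⟨0, hn⟩⟩
    have hcard : Fintype.card (Fin n) = Module.finrank ℝ (EuclideanSpace ℝ (Fin n)) := by simp
    let bu : Module.Basis (Fin n) ℝ (EuclideanSpace ℝ (Fin n)) :=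
      basisOfLinearIndependentOfCardEqFinrank hli hcard
    have hbu : ∀ i, bu i = u i := fun i => by
      simp [bu, coe_basisOfLinearIndependentOfCardEqFinrank]
    intro v
    have h1 := bu.sum_repr v
    simp_rw [hbu] at h1
    have h2 : ∀ j, (inner ℝ (ustar j) v : ℝ) = bu.repr v j := by
      intro j
      conv_lhs => rw [← h1]
      rw [inner_sum]
      simp_rw [real_inner_smul_right, hdual, mul_ite, mul_one, mul_zero,
        Finset.sum_ite_eq, Finset.mem_univ, if_true]
    conv_lhs => rw [← h1]
    exact Finset.sum_congr rfl fun i _ => by rw [h2 i]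
  -- determinant nonzero
  have hM : M.det ≠ 0 := by
    let e := (EuclideanSpace.basisFun (Fin n) ℝ).toBasis
    have h1 : M = e.toMatrix u := by
      ext a b
      simp [hMdef, Module.Basis.toMatrix_apply, e, EuclideanSpace.basisFun_repr]
    have hspan := hli.span_eq_top_of_card_eq_finrank' (by simp)
    rw [h1, ← e.det_apply]
    exact ((Module.Basis.is_basis_iff_det e).mp ⟨hli, hspan⟩).ne_zero
  -- triangle inequality for sums
  have hNsum : ∀ (s : Finset (Fin n)) (f : Fin n → EuclideanSpace ℝ (Fin n)),
      N (∑ i ∈ s, f i) ≤ ∑ i ∈ s, N (f i) := by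
    intro s f
    induction s using Finset.induction_on with
    | empty => simp [hN0']
    | @insert a s ha ih =>
        rw [Finset.sum_insert ha, Finset.sum_insert ha]
        exact le_trans (hNtri _ _) (add_le_add le_rfl ih)
  -- upper bound on N
  have hNle : ∀ v, N v ≤ ∑ i, |(inner ℝ (ustar i) v : ℝ)| := by
    intro v
    calc N v = N (∑ i, (inner ℝ (ustar i) v : ℝ) • u i) := by rw [← hrep]
    _ ≤ ∑ i, N ((inner ℝ (ustar i) v : ℝ) • u i) := hNsum _ _
    _ ≤ ∑ i, |(inner ℝ (ustar i) v : ℝ)| := by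
        refine Finset.sum_le_sum fun i _ => ?_
        rw [hNhom]
        exact mul_le_of_le_one_right (abs_nonneg _) (humem i)
  -- coordinate bounds
  have hcoord : ∀ (i : Fin n) v, |(inner ℝ (ustar i) v : ℝ)| ≤ N v := by
    intro i v
    by_cases hv : v = 0
    · simp [hv, hN0']
    · have hNv : 0 < N v := lt_of_le_of_ne (hN0 v) (fun h => hv ((hNdef v).mp h.symm))
      set c : ℝ := (N v)⁻¹ with hc
      set v' : EuclideanSpace ℝ (Fin n) := c • v with hv'
      have hNv' : N v' ≤ 1 := by
        rw [hv', hNhom, hc, abs_of_pos (inv_pos.mpr hNv), inv_mul_cancel₀ hNv.ne']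
      set w := Function.update u i v' with hw
      have hwle : ∀ j, N (w j) ≤ 1 := by
        intro j
        rcases eq_or_ne j i with rfl | h
        · simpa [hw] using hNv'
        · simpa [hw, Function.update_of_ne h] using humem j
      have hdet := humax w hwle
      have hWM : (Matrix.of fun a b : Fin n => w b a) =
          M.updateCol i (fun a => v' a) := by
        ext a b
        simp only [Matrix.of_apply, Matrix.updateCol_apply, hMdef, hw, Function.update_apply]
        by_cases h : b = i <;> simp [h]
      have hfun : (fun a => v' a) = fun k => ∑ j, (inner ℝ (ustar j) v' : ℝ) • M k j := by
        funext k
        conv_lhs => rw [hrep v']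
        rw [hsum_apply]
        simp [hMdef, smul_eq_mul]
      have hdet2 : (Matrix.of fun a b : Fin n => w b a).det =
          (inner ℝ (ustar i) v' : ℝ) * M.det := by
        rw [hWM, hfun, Matrix.det_updateCol_sum, smul_eq_mul]
      rw [hdet2, abs_mul] at hdet
      have h1 : |(inner ℝ (ustar i) v' : ℝ)| ≤ 1 := by
        have hMpos : 0 < |M.det| := abs_pos.mpr hM
        nlinarith [hdet, abs_nonneg (inner ℝ (ustar i) v' : ℝ)]
      have h2 : (inner ℝ (ustar i) v' : ℝ) = c * (inner ℝ (ustar i) v : ℝ) := by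
        rw [hv', real_inner_smul_right]
      rw [h2, abs_mul, hc, abs_of_pos (inv_pos.mpr hNv)] at h1
      calc |(inner ℝ (ustar i) v : ℝ)| = N v * ((N v)⁻¹ * |(inner ℝ (ustar i) v : ℝ)|) := by
            field_simp
      _ ≤ N v * 1 := by
            exact mul_le_mul_of_nonneg_left h1 (le_of_lt hNv)
      _ = N v := mul_one _
  have hsup : ∀ v, (⨆ i : Fin n, |(inner ℝ (ustar i) v : ℝ)|) ≤ N v := by
    intro v
    rcases isEmpty_or_nonempty (Fin n) with h | h
    · rw [Real.iSup_of_isEmpty]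
      exact hN0 v
    · exact ciSup_le fun i => hcoord i v
  -- the linear map sending e_i to u_i
  set T : EuclideanSpace ℝ (Fin n) →ₗ[ℝ] EuclideanSpace ℝ (Fin n) := Matrix.toEuclideanLin M
    with hT
  have hTdet : LinearMap.det T = M.det := by
    rw [hT, Matrix.toEuclideanLin_eq_toLin_orthonormal]
    exact LinearMap.det_toLin _ _
  have hTx : ∀ x : EuclideanSpace ℝ (Fin n), T x = ∑ j, x j • u j := by
    intro x
    apply (WithLp.equiv 2 (Fin n → ℝ)).injective
    funext a
    have h1 : T x a = ∑ b, M a b * x b := by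
      rw [hT, Matrix.toEuclideanLin_apply]
      rfl
    have h2 : (∑ j, x j • u j) a = ∑ j, x j * u j a := hsum_apply _ _ _
    show T x a = (∑ j, x j • u j) a
    rw [h1, h2]
    exact Finset.sum_congr rfl fun b _ => mul_comm _ _
  have hsub1 : {v : EuclideanSpace ℝ (Fin n) | N v ≤ 1} ⊆
      T '' {x : EuclideanSpace ℝ (Fin n) | ∀ i, |x i| ≤ 1} := by
    intro v hv
    refine ⟨(WithLp.equiv 2 (Fin n → ℝ)).symm (fun i => (inner ℝ (ustar i) v : ℝ)), fun i => ?_, ?_⟩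
    · show |(inner ℝ (ustar i) v : ℝ)| ≤ 1
      exact le_trans (hcoord i v) hv
    · rw [hTx]
      exact (hrep v).symm
  have hsub2 : T '' {x : EuclideanSpace ℝ (Fin n) | ∑ i, |x i| ≤ 1} ⊆
      {v : EuclideanSpace ℝ (Fin n) | N v ≤ 1} := by
    rintro _ ⟨x, hx, rfl⟩
    show N (T x) ≤ 1
    rw [hTx]
    calc N (∑ j, x j • u j) ≤ ∑ j, N (x j • u j) := hNsum _ _
    _ ≤ ∑ j, |x j| := Finset.sum_le_sum fun j _ => by
        rw [hNhom]
        exact mul_le_of_le_one_right (abs_nonneg _) (humem j)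
    _ ≤ 1 := hx
  have hvol_img : ∀ s : Set (EuclideanSpace ℝ (Fin n)),
      volume (T '' s) = ENNReal.ofReal |M.det| * volume s := by
    intro s
    rw [Measure.addHaar_image_linearMap, hTdet]
  have hcube : volume {x : EuclideanSpace ℝ (Fin n) | ∀ i, |x i| ≤ 1}
      = (ENNReal.ofReal 2) ^ n := by
    have hpre : (MeasurableEquiv.toLp 2 (Fin n → ℝ)).symm ⁻¹' {y : Fin n → ℝ | ∀ i, |y i| ≤ 1}
        = {x : EuclideanSpace ℝ (Fin n) | ∀ i, |x i| ≤ 1} := by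
      ext x; rfl
    rw [← hpre,
      (EuclideanSpace.volume_preserving_symm_measurableEquiv_toLp (Fin n)).measure_preimage_equiv]
    have h1 : {y : Fin n → ℝ | ∀ i, |y i| ≤ 1} = Set.pi Set.univ fun _ => Set.Icc (-1:ℝ) 1 := by
      ext y
      simp only [Set.mem_setOf_eq, Set.mem_pi, Set.mem_univ, forall_true_left, Set.mem_Icc,
        abs_le]
    rw [h1, volume_pi_pi]
    norm_num [Real.volume_Icc]
  have hcross : volume {x : EuclideanSpace ℝ (Fin n) | ∑ i, |x i| ≤ 1}
      = ENNReal.ofReal (2 ^ n / (Nat.factorial n : ℝ)) := by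
    have hpre : (MeasurableEquiv.toLp 2 (Fin n → ℝ)).symm ⁻¹' {y : Fin n → ℝ | ∑ i, |y i| ≤ 1}
        = {x : EuclideanSpace ℝ (Fin n) | ∑ i, |x i| ≤ 1} := by
      ext x; rfl
    rw [← hpre,
      (EuclideanSpace.volume_preserving_symm_measurableEquiv_toLp (Fin n)).measure_preimage_equiv]
    rcases Nat.eq_zero_or_pos n with hn | hn
    · subst hn
      have huniv : {y : Fin 0 → ℝ | ∑ i, |y i| ≤ 1} = Set.univ := by
        ext y; simp
      rw [huniv]
      rw [show ((2:ℝ) ^ 0 / (Nat.factorial 0 : ℝ)) = 1 by norm_num, ENNReal.ofReal_one]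
      rw [← Set.pi_univ Set.univ, volume_pi_pi]
      simp
    haveI : Nonempty (Fin n) := ⟨⟨0, hn⟩⟩
    have h1 : {y : Fin n → ℝ | ∑ i, |y i| ≤ 1}
        = {y : Fin n → ℝ | (∑ i, |y i| ^ (1:ℝ)) ^ (1/(1:ℝ)) ≤ 1} := by
      ext y; simp [Real.rpow_one]
    rw [h1, MeasureTheory.volume_sum_rpow_le _ le_rfl 1]
    norm_num
    rw [Real.Gamma_nat_eq_factorial n]
  have hfin : volume {v : EuclideanSpace ℝ (Fin n) | N v ≤ 1} ≠ ⊤ := hKc.measure_lt_top.ne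
  refine ⟨fun v => ⟨hsup v, hNle v⟩, ?_, ?_⟩
  · have h := measure_mono (μ := volume) hsub2
    rw [hvol_img, hcross, ← ENNReal.ofReal_mul (abs_nonneg _)] at h
    have h2 := (ENNReal.ofReal_le_iff_le_toReal hfin).mp h
    linarith [h2]
  · have h := measure_mono (μ := volume) hsub1
    rw [hvol_img, hcube, ← ENNReal.ofReal_pow (by norm_num : (0:ℝ) ≤ 2),
      ← ENNReal.ofReal_mul (abs_nonneg _)] at h
    have h2 := ENNReal.toReal_le_of_le_ofReal (by positivity) h
    linarith [h2]
end

section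
/- Restricted weak-type substitute for Hölder: let (X, σ) be a measure space, w, d nonnegative measurable functions with d > 0 a.e., E ⊆ X measurable, and 1 < p < ∞ with conjugate p'. Then ∫_E w dσ ≤ 2 (∫_E d dσ)^{1/p} · [sup_{ε>0} ε^{1−p'} ∫_X 1_{d < ε w} · w dσ]^{1/p'}. -/
open MeasureTheory ENNReal NNReal

/-- Restricted weak-type substitute for Hölder: for nonnegative measurable `w, d` with
`d > 0` a.e., a measurable set `E`, and conjugate exponents `1 < p, p' < ∞`,
`∫_E w dσ ≤ 2 (∫_E d dσ)^{1/p} · [sup_{ε>0} ε^{1−p'} ∫ 1_{d < ε w} w dσ]^{1/p'}`. -/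
theorem stmt16 {X : Type*} [MeasurableSpace X] (σ : Measure X)
    (w d : X → ℝ≥0) (hw : Measurable w) (hd : Measurable d)
    (hd0 : ∀ᵐ x ∂σ, 0 < d x)
    (E : Set X) (hE : MeasurableSet E)
    (p p' : ℝ) (hp : 1 < p) (hpp' : 1 / p + 1 / p' = 1) :
    ∫⁻ x in E, (w x : ℝ≥0∞) ∂σ ≤
      2 * (∫⁻ x in E, (d x : ℝ≥0∞) ∂σ) ^ (1 / p) *
        (⨆ (ε : ℝ≥0) (_ : 0 < ε),
            (ε : ℝ≥0∞) ^ (1 - p') * ∫⁻ x in {x | d x < ε * w x}, (w x : ℝ≥0∞) ∂σ) ^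
          (1 / p') := by
  set W := ∫⁻ x in E, (w x : ℝ≥0∞) ∂σ with hWdef
  set D := ∫⁻ x in E, (d x : ℝ≥0∞) ∂σ with hDdef
  set S := ⨆ (ε : ℝ≥0) (_ : 0 < ε),
      (ε : ℝ≥0∞) ^ (1 - p') * ∫⁻ x in {x | d x < ε * w x}, (w x : ℝ≥0∞) ∂σ with hSdef
  -- exponent facts
  have hp0 : (0:ℝ) < p := lt_trans one_pos hp
  have hinvp : 0 < 1/p := by positivity
  have hinvp1 : 1/p < 1 := by rw [div_lt_one hp0]; exact hp
  have hinvp' : 0 < 1/p' := by linarith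
  have hp'0 : (0:ℝ) < p' := one_div_pos.mp hinvp'
  have hp'1 : 1 < p' := (div_lt_one hp'0).mp (by linarith)
  have hsum : p + p' = p * p' := by field_simp at hpp'; linarith
  have hkey : (1 - p') * (1/p') = -(1/p) := by
    field_simp
    nlinarith [hsum]
  -- measurability of the level sets
  have hAm : ∀ ε : ℝ≥0, MeasurableSet {x | d x < ε * w x} :=
    fun ε => measurableSet_lt hd (hw.const_mul ε)
  -- Chebyshev
  have cheb : ∀ ε : ℝ≥0, 0 < ε →
      ∫⁻ x in {x | d x < ε * w x}ᶜ, (w x : ℝ≥0∞) ∂(σ.restrict E) ≤ (ε : ℝ≥0∞)⁻¹ * D := by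
    intro ε hε
    have hεne : (ε : ℝ≥0∞) ≠ 0 := ENNReal.coe_ne_zero.mpr hε.ne'
    have h1 : ∫⁻ x in {x | d x < ε * w x}ᶜ, (w x : ℝ≥0∞) ∂(σ.restrict E)
        ≤ ∫⁻ x in {x | d x < ε * w x}ᶜ, (ε : ℝ≥0∞)⁻¹ * (d x : ℝ≥0∞) ∂(σ.restrict E) := by
      apply setLIntegral_mono (measurable_const.mul hd.coe_nnreal_ennreal)
      intro x hx
      have hx' : (ε : ℝ≥0) * w x ≤ d x := not_lt.mp hx
      have hx'' : (ε : ℝ≥0∞) * (w x : ℝ≥0∞) ≤ (d x : ℝ≥0∞) := by exact_mod_cast hx'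
      have hw' : (w x : ℝ≥0∞) = (ε : ℝ≥0∞)⁻¹ * ((ε : ℝ≥0∞) * w x) := by
        rw [← mul_assoc, ENNReal.inv_mul_cancel hεne ENNReal.coe_ne_top, one_mul]
      rw [hw']
      exact mul_le_mul_right hx'' _
    calc ∫⁻ x in {x | d x < ε * w x}ᶜ, (w x : ℝ≥0∞) ∂(σ.restrict E)
        ≤ ∫⁻ x in {x | d x < ε * w x}ᶜ, (ε : ℝ≥0∞)⁻¹ * (d x : ℝ≥0∞) ∂(σ.restrict E) := h1
      _ = (ε : ℝ≥0∞)⁻¹ * ∫⁻ x in {x | d x < ε * w x}ᶜ, (d x : ℝ≥0∞) ∂(σ.restrict E) :=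
          lintegral_const_mul _ hd.coe_nnreal_ennreal
      _ ≤ (ε : ℝ≥0∞)⁻¹ * D := mul_le_mul_right (setLIntegral_le_lintegral _ _) _
  -- splitting of W
  have split : ∀ ε : ℝ≥0,
      (∫⁻ x in {x | d x < ε * w x}, (w x : ℝ≥0∞) ∂(σ.restrict E)) +
      (∫⁻ x in {x | d x < ε * w x}ᶜ, (w x : ℝ≥0∞) ∂(σ.restrict E)) = W :=
    fun ε => lintegral_add_compl _ (hAm ε)
  -- restricted integral is smaller
  have hmono : ∀ ε : ℝ≥0, (∫⁻ x in {x | d x < ε * w x}, (w x : ℝ≥0∞) ∂(σ.restrict E))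
      ≤ ∫⁻ x in {x | d x < ε * w x}, (w x : ℝ≥0∞) ∂σ :=
    fun ε => lintegral_mono' (Measure.restrict_mono (subset_refl _) Measure.restrict_le_self)
      le_rfl
  -- S dominates each term
  have hSge : ∀ ε : ℝ≥0, 0 < ε →
      (ε : ℝ≥0∞) ^ (1 - p') * (∫⁻ x in {x | d x < ε * w x}, (w x : ℝ≥0∞) ∂σ) ≤ S := by
    intro ε hε
    exact le_iSup₂ (f := fun (ε : ℝ≥0) (_ : 0 < ε) =>
      (ε : ℝ≥0∞) ^ (1 - p') * ∫⁻ x in {x | d x < ε * w x}, (w x : ℝ≥0∞) ∂σ) ε hε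
  -- trivial case W = 0
  rcases eq_or_ne W 0 with hW0 | hW0
  · rw [hW0]; exact zero_le
  -- D ≠ 0
  have hD0 : D ≠ 0 := by
    intro h
    apply hW0
    have hdz : ∀ᵐ x ∂(σ.restrict E), (d x : ℝ≥0∞) = 0 :=
      (lintegral_eq_zero_iff hd.coe_nnreal_ennreal).mp h
    have hdp : ∀ᵐ x ∂(σ.restrict E), 0 < d x :=
      Filter.Eventually.filter_mono (ae_mono Measure.restrict_le_self) hd0
    have hfalse : ∀ᵐ _x ∂(σ.restrict E), False := by
      filter_upwards [hdz, hdp] with x h1 h2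
      exact absurd (ENNReal.coe_eq_zero.mp h1) h2.ne'
    have hzero : σ.restrict E = 0 :=
      ae_eq_bot.mp (Filter.eventually_false_iff_eq_bot.mp hfalse)
    rw [hWdef, hzero, lintegral_zero_measure]
  -- W is bounded by the sum over the union of level sets
  have hU : W ≤ ∑' n : ℕ, ∫⁻ x in {x | d x < (n : ℝ≥0) * w x}, (w x : ℝ≥0∞) ∂σ := by
    have hUm : MeasurableSet (⋃ n : ℕ, {x | d x < (n : ℝ≥0) * w x}) :=
      MeasurableSet.iUnion fun n => hAm _
    have hsub : ∀ x, x ∈ (⋃ n : ℕ, {x | d x < (n : ℝ≥0) * w x})ᶜ → (w x : ℝ≥0∞) = 0 := by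
      intro x hx
      by_contra hwx
      have hwx' : w x ≠ 0 := fun h => hwx (by simp [h])
      obtain ⟨n, hn⟩ := exists_nat_gt (d x / w x : ℝ≥0)
      apply hx
      refine Set.mem_iUnion.mpr ⟨n, ?_⟩
      have : d x / w x < (n : ℝ≥0) := by exact_mod_cast hn
      exact (div_lt_iff₀ (pos_iff_ne_zero.mpr hwx')).mp this
    calc W ≤ ∫⁻ x, (w x : ℝ≥0∞) ∂σ := setLIntegral_le_lintegral _ _
      _ = (∫⁻ x in ⋃ n : ℕ, {x | d x < (n : ℝ≥0) * w x}, (w x : ℝ≥0∞) ∂σ) +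
          (∫⁻ x in (⋃ n : ℕ, {x | d x < (n : ℝ≥0) * w x})ᶜ, (w x : ℝ≥0∞) ∂σ) :=
          (lintegral_add_compl _ hUm).symm
      _ = (∫⁻ x in ⋃ n : ℕ, {x | d x < (n : ℝ≥0) * w x}, (w x : ℝ≥0∞) ∂σ) + 0 := by
          congr 1
          rw [setLIntegral_congr_fun hUm.compl
            (fun x hx => hsub x hx)]
          simp
      _ = ∫⁻ x in ⋃ n : ℕ, {x | d x < (n : ℝ≥0) * w x}, (w x : ℝ≥0∞) ∂σ := by rw [add_zero]
      _ ≤ ∑' n : ℕ, ∫⁻ x in {x | d x < (n : ℝ≥0) * w x}, (w x : ℝ≥0∞) ∂σ :=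
          lintegral_iUnion_le _ _
  -- S ≠ 0
  have hS0 : S ≠ 0 := by
    intro h0
    have hterm : ∀ ε : ℝ≥0, 0 < ε →
        ∫⁻ x in {x | d x < ε * w x}, (w x : ℝ≥0∞) ∂σ = 0 := by
      intro ε hε
      have h := hSge ε hε
      rw [h0, nonpos_iff_eq_zero] at h
      rcases mul_eq_zero.mp h with h | h
      · exfalso
        rcases ENNReal.rpow_eq_zero_iff.mp h with ⟨h1, _⟩ | ⟨h1, _⟩
        · exact ENNReal.coe_ne_zero.mpr hε.ne' h1
        · exact ENNReal.coe_ne_top h1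
      · exact h
    apply hW0
    refine le_antisymm ?_ zero_le
    refine le_trans hU (le_of_eq ?_)
    rw [ENNReal.tsum_eq_zero]
    intro n
    rcases Nat.eq_zero_or_pos n with hn | hn
    · subst hn
      have : {x | d x < ((0 : ℕ) : ℝ≥0) * w x} = (∅ : Set X) := by
        ext x; simp
      rw [this]; simp
    · exact hterm _ (by exact_mod_cast hn)
  -- case D = ⊤
  by_cases hDt : D = ⊤
  · rw [hDt, ENNReal.top_rpow_of_pos hinvp]
    have hSp : S ^ (1/p') ≠ 0 := by
      intro h
      rcases ENNReal.rpow_eq_zero_iff.mp h with ⟨h1, _⟩ | ⟨_, h2⟩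
      · exact hS0 h1
      · linarith
    have : (2 : ℝ≥0∞) * ⊤ * S ^ (1/p') = ⊤ := by
      rw [ENNReal.mul_top (by norm_num), ENNReal.top_mul hSp]
    rw [this]; exact le_top
  -- case W = ⊤ (with D finite)
  by_cases hWt : W = ⊤
  · have h1 : ∫⁻ x in {x | d x < (1 : ℝ≥0) * w x}ᶜ, (w x : ℝ≥0∞) ∂(σ.restrict E) ≤ D := by
      have := cheb 1 one_pos
      simpa using this
    have h2 : ∫⁻ x in {x | d x < (1 : ℝ≥0) * w x}, (w x : ℝ≥0∞) ∂(σ.restrict E) = ⊤ := by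
      by_contra hne
      have := split 1
      rw [hWt] at this
      exact (ENNReal.add_ne_top.mpr ⟨hne, (h1.trans_lt (lt_top_iff_ne_top.mpr hDt)).ne⟩) this
    have h3 : ∫⁻ x in {x | d x < (1 : ℝ≥0) * w x}, (w x : ℝ≥0∞) ∂σ = ⊤ :=
      top_le_iff.mp (h2 ▸ hmono 1)
    have hStop : S = ⊤ := by
      have h4 := hSge 1 one_pos
      rw [h3] at h4
      simp only [ENNReal.coe_one, ENNReal.one_rpow, one_mul] at h4
      exact top_le_iff.mp h4
    rw [hStop, ENNReal.top_rpow_of_pos hinvp']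
    have hDp : D ^ (1/p) ≠ 0 := by
      intro h
      rcases ENNReal.rpow_eq_zero_iff.mp h with ⟨h1, _⟩ | ⟨h1, _⟩
      · exact hD0 h1
      · exact hDt h1
    have : (2 : ℝ≥0∞) * D ^ (1/p) * ⊤ = ⊤ := by
      rw [ENNReal.mul_top]
      intro h
      rcases mul_eq_zero.mp h with h | h
      · norm_num at h
      · exact hDp h
    rw [this]; exact le_top
  -- main case: 0 < W < ⊤, 0 < D < ⊤
  have hWne : W ≠ ⊤ := hWt
  have hε0 : (2 * D / W : ℝ≥0∞) ≠ 0 := by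
    rw [Ne, ENNReal.div_eq_zero_iff]
    push_neg
    exact ⟨mul_ne_zero (by norm_num) hD0, hWne⟩
  have hεt : (2 * D / W : ℝ≥0∞) ≠ ⊤ := by
    rw [Ne, ENNReal.div_eq_top]
    push_neg
    constructor
    · intro _; exact hW0
    · intro h; exact absurd h (ENNReal.mul_ne_top (by norm_num) hDt)
  set ε : ℝ≥0 := (2 * D / W).toNNReal with hεdef
  have hεcoe : (ε : ℝ≥0∞) = 2 * D / W := ENNReal.coe_toNNReal hεt
  have hεpos : 0 < ε := by
    rw [← ENNReal.coe_pos, hεcoe]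
    exact pos_iff_ne_zero.mpr hε0
  have hc0 : W / 2 ≠ 0 := by
    rw [Ne, ENNReal.div_eq_zero_iff]
    push_neg
    exact ⟨hW0, by norm_num⟩
  have hct : W / 2 ≠ ⊤ := (ENNReal.div_lt_top hWne (by norm_num)).ne
  -- Chebyshev bound equals W/2
  have hhalf : (ε : ℝ≥0∞)⁻¹ * D ≤ W / 2 := by
    rw [hεcoe, ENNReal.inv_div (Or.inl hWne) (Or.inl hW0)]
    apply le_of_eq
    rw [div_eq_mul_inv W (2 * D), ENNReal.mul_inv (Or.inl (by norm_num)) (Or.inl (by norm_num))]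
    calc W * (2⁻¹ * D⁻¹) * D = W * 2⁻¹ * (D⁻¹ * D) := by ring
      _ = W * 2⁻¹ := by rw [ENNReal.inv_mul_cancel hD0 hDt, mul_one]
      _ = W / 2 := (div_eq_mul_inv W 2).symm
  -- the good part of E carries at least half the mass
  have hIA : W / 2 ≤ ∫⁻ x in {x | d x < ε * w x}, (w x : ℝ≥0∞) ∂(σ.restrict E) := by
    have hC : ∫⁻ x in {x | d x < ε * w x}ᶜ, (w x : ℝ≥0∞) ∂(σ.restrict E) ≤ W / 2 :=
      (cheb ε hεpos).trans hhalf
    have hWle : W / 2 + W / 2 ≤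
        (∫⁻ x in {x | d x < ε * w x}, (w x : ℝ≥0∞) ∂(σ.restrict E)) + W / 2 := by
      rw [ENNReal.add_halves]
      conv_lhs => rw [← split ε]
      exact add_le_add le_rfl hC
    exact (ENNReal.add_le_add_iff_right hct).mp hWle
  have hSlb : (ε : ℝ≥0∞) ^ (1 - p') * (W / 2) ≤ S :=
    le_trans (mul_le_mul_right (hIA.trans (hmono ε)) _) (hSge ε hεpos)
  -- arithmetic: the choice of ε makes everything collapse
  have harith : D * (W / (2 * D)) = W / 2 := by
    rw [div_eq_mul_inv W (2 * D), ENNReal.mul_inv (Or.inl (by norm_num)) (Or.inl (by norm_num))]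
    calc D * (W * (2⁻¹ * D⁻¹)) = W * 2⁻¹ * (D⁻¹ * D) := by ring
      _ = W * 2⁻¹ := by rw [ENNReal.inv_mul_cancel hD0 hDt, mul_one]
      _ = W / 2 := (div_eq_mul_inv W 2).symm
  have hane : ((2 * D / W : ℝ≥0∞)) ^ (1 - p') ≠ ⊤ := by
    intro h
    rcases ENNReal.rpow_eq_top_iff.mp h with ⟨h1, _⟩ | ⟨h1, _⟩
    · exact hε0 h1
    · exact hεt h1
  have hWdivne : W / (2 * D) ≠ ⊤ :=
    (ENNReal.div_lt_top hWne (mul_ne_zero (by norm_num) hD0)).ne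
  have hRHS : 2 * D ^ (1/p) * (((ε : ℝ≥0∞)) ^ (1 - p') * (W / 2)) ^ (1/p') = W := by
    rw [hεcoe]
    rw [ENNReal.mul_rpow_of_ne_top hane hct]
    rw [← ENNReal.rpow_mul, hkey, ENNReal.rpow_neg, ← ENNReal.inv_rpow,
      ENNReal.inv_div (Or.inl hWne) (Or.inl hW0)]
    have hre : (2 : ℝ≥0∞) * D ^ (1/p) * ((W / (2 * D)) ^ (1/p) * (W / 2) ^ (1/p')) =
        2 * (D ^ (1/p) * (W / (2 * D)) ^ (1/p)) * (W / 2) ^ (1/p') := by ring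
    rw [hre, ← ENNReal.mul_rpow_of_ne_top hDt hWdivne, harith, mul_assoc,
      ← ENNReal.rpow_add _ _ hc0 hct, hpp', ENNReal.rpow_one, mul_comm,
      ENNReal.div_mul_cancel (by norm_num) (by norm_num)]
  calc W = 2 * D ^ (1/p) * (((ε : ℝ≥0∞)) ^ (1 - p') * (W / 2)) ^ (1/p') := hRHS.symm
    _ ≤ 2 * D ^ (1/p) * S ^ (1/p') :=
      mul_le_mul_right (ENNReal.rpow_le_rpow hSlb hinvp'.le) _
end

section
/- Let π(x,y) := ½(|x−y|² − R²) on ℝⁿ×ℝⁿ with R > 0, and let f := (4R)^{−n}·χ_{[−2R,2R]ⁿ}. For any vectors ω₁,…,ω_n ∈ ℝⁿ, there is a constant C_n depending only on n such that for all x ∈ [−R,R)ⁿ: ∑_{i=1}^n ‖ω_i‖ ≤ C_n R ∫_{|x−y|=R} f(y) (∑_{i=1}^n |(x−y)·ω_i|²)^{1/2} dH^{n−1}(y)/R. -/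
open MeasureTheory Set
open scoped ENNReal NNReal Pointwise

noncomputable section

namespace Stmt17Aux

lemma coord_le_norm {ι : Type*} [Fintype ι] (w : EuclideanSpace ℝ ι) (i : ι) : |w i| ≤ ‖w‖ := by
  rw [EuclideanSpace.norm_eq, ← Real.sqrt_sq_eq_abs]
  apply Real.sqrt_le_sqrt
  calc (w i) ^ 2 = ‖w i‖ ^ 2 := by rw [Real.norm_eq_abs, sq_abs]
  _ ≤ ∑ j, ‖w j‖ ^ 2 := Finset.single_le_sum (f := fun j => ‖w j‖ ^ 2) (fun j _ => sq_nonneg _) (Finset.mem_univ i)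

lemma face_finite (m : ℕ) (i : Fin (m+1)) (ε : ℝ) :
    μH[(m:ℝ)] {y : Fin (m+1) → ℝ | y i = ε ∧ ∀ j, |y j| ≤ 1} < ⊤ := by
  have hmeq : (μH[(m:ℝ)] : Measure (Fin m → ℝ)) = volume := by
    have := hausdorffMeasure_pi_real (ι := Fin m)
    simpa using this
  have h1 : {y : Fin (m+1) → ℝ | y i = ε ∧ ∀ j, |y j| ≤ 1} ⊆
      (fun v : Fin m → ℝ => (i.insertNth ε v : Fin (m+1) → ℝ)) '' (Set.pi Set.univ fun _ => Set.Icc (-1:ℝ) 1) := by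
    rintro y ⟨hyi, hy⟩
    refine ⟨fun j => y (i.succAbove j), fun j _ => abs_le.mp (hy _), ?_⟩
    rw [← hyi]
    exact Fin.insertNth_self_removeNth i y
  have h2 : LipschitzWith 1 (fun v : Fin m → ℝ => (i.insertNth ε v : Fin (m+1) → ℝ)) := by
    apply LipschitzWith.of_dist_le_mul
    intro v v'
    rw [NNReal.coe_one, one_mul, dist_pi_le_iff dist_nonneg]
    intro j
    refine Fin.succAboveCases (α := fun j => dist ((i.insertNth ε v : Fin (m+1) → ℝ) j)
      ((i.insertNth ε v' : Fin (m+1) → ℝ) j) ≤ dist v v') i ?_ ?_ j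
    · simp [dist_nonneg]
    · intro k
      simp only [Fin.insertNth_apply_succAbove]
      exact dist_le_pi_dist v v' k
  calc μH[(m:ℝ)] {y : Fin (m+1) → ℝ | y i = ε ∧ ∀ j, |y j| ≤ 1}
      ≤ μH[(m:ℝ)] ((fun v : Fin m → ℝ => (i.insertNth ε v : Fin (m+1) → ℝ)) ''
        (Set.pi Set.univ fun _ => Set.Icc (-1:ℝ) 1)) := measure_mono h1
    _ ≤ (1 : ℝ≥0∞) ^ (m:ℝ) * μH[(m:ℝ)] (Set.pi Set.univ fun _ => Set.Icc (-1:ℝ) 1) := by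
        simpa using h2.hausdorffMeasure_image_le (by positivity) _
    _ < ⊤ := by
        rw [ENNReal.one_rpow, one_mul, hmeq]
        have : volume (Set.pi Set.univ fun _ : Fin m => Set.Icc (-1:ℝ) 1) = (ENNReal.ofReal 2)^m := by
          rw [volume_pi_pi]
          simp [Real.volume_Icc]
          norm_num
        rw [this]
        exact ENNReal.pow_lt_top (by simp)


lemma boundary_finite (m : ℕ) :
    μH[(m:ℝ)] {y : Fin (m+1) → ℝ | (∀ j, |y j| ≤ 1) ∧ ∃ i, |y i| = 1} < ⊤ := by
  have hsub : {y : Fin (m+1) → ℝ | (∀ j, |y j| ≤ 1) ∧ ∃ i, |y i| = 1} ⊆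
      ⋃ i : Fin (m+1), ({y : Fin (m+1) → ℝ | y i = 1 ∧ ∀ j, |y j| ≤ 1} ∪
        {y : Fin (m+1) → ℝ | y i = -1 ∧ ∀ j, |y j| ≤ 1}) := by
    rintro y ⟨hle, i, hi⟩
    refine Set.mem_iUnion.2 ⟨i, ?_⟩
    rcases abs_eq (by norm_num : (0:ℝ) ≤ 1) |>.mp hi with h | h
    · exact Or.inl ⟨h, hle⟩
    · exact Or.inr ⟨h, hle⟩
  refine lt_of_le_of_lt ((measure_mono hsub).trans (measure_iUnion_le _)) ?_
  rw [tsum_fintype]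
  refine ENNReal.sum_lt_top.2 fun i _ => ?_
  exact lt_of_le_of_lt (measure_union_le _ _)
    (ENNReal.add_lt_top.2 ⟨face_finite m i 1, face_finite m i (-1)⟩)

lemma sphere_finite (m : ℕ) :
    μH[(m:ℝ)] {w : EuclideanSpace ℝ (Fin (m+1)) | ‖w‖ = 1} < ⊤ := by
  classical
  set E := EuclideanSpace ℝ (Fin (m+1))
  -- the equiv from the pi type to EuclideanSpace is Lipschitz
  set T : (Fin (m+1) → ℝ) → E := fun v => (WithLp.equiv 2 (Fin (m+1) → ℝ)).symm v with hT
  set K : ℝ≥0 := ((m:ℝ≥0)+1) ^ (2⁻¹ : ℝ) with hKdef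
  have hK : LipschitzWith K T := by
    intro a b
    have := (PiLp.antilipschitzWith_ofLp 2 (fun _ : Fin (m+1) => ℝ)) (T a) (T b)
    simpa [hT] using this
  set B : Set E := {y : E | (∀ j, |y j| ≤ 1) ∧ ∃ i, |y i| = 1} with hB
  have hBU : B ⊆ {y : E | 1 ≤ ‖y‖} := by
    rintro y ⟨_, i, hi⟩
    exact hi ▸ coord_le_norm y i
  -- radial projection is Lipschitz on the complement of the unit ball
  have hproj : LipschitzOnWith 2 (fun y : E => ‖y‖⁻¹ • y) {y : E | 1 ≤ ‖y‖} := by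
    apply LipschitzOnWith.of_dist_le_mul
    intro a ha b hb
    have ha1 : (1:ℝ) ≤ ‖a‖ := ha
    have hb1 : (1:ℝ) ≤ ‖b‖ := hb
    have ha0 : (0:ℝ) < ‖a‖ := lt_of_lt_of_le one_pos ha1
    have hb0 : (0:ℝ) < ‖b‖ := lt_of_lt_of_le one_pos hb1
    rw [dist_eq_norm, dist_eq_norm]
    have hsplit : ‖a‖⁻¹ • a - ‖b‖⁻¹ • b = ‖a‖⁻¹ • (a - b) + (‖a‖⁻¹ - ‖b‖⁻¹) • b := by
      module
    rw [hsplit]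
    have h1 : ‖‖a‖⁻¹ • (a - b)‖ ≤ ‖a - b‖ := by
      rw [norm_smul, Real.norm_eq_abs, abs_of_pos (inv_pos.2 ha0)]
      calc ‖a‖⁻¹ * ‖a - b‖ ≤ 1 * ‖a - b‖ := by
            apply mul_le_mul_of_nonneg_right _ (norm_nonneg _)
            rw [inv_le_one_iff₀]; right; exact ha1
        _ = ‖a - b‖ := one_mul _
    have h2 : ‖(‖a‖⁻¹ - ‖b‖⁻¹) • b‖ ≤ ‖a - b‖ := by
      rw [norm_smul, Real.norm_eq_abs]
      have heq : ‖a‖⁻¹ - ‖b‖⁻¹ = (‖b‖ - ‖a‖) / (‖a‖ * ‖b‖) := by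
        field_simp
      rw [heq, abs_div, abs_of_pos (mul_pos ha0 hb0)]
      have hnum : |‖b‖ - ‖a‖| ≤ ‖a - b‖ := by
        rw [abs_sub_comm]
        exact (abs_norm_sub_norm_le a b)
      calc |‖b‖ - ‖a‖| / (‖a‖ * ‖b‖) * ‖b‖ = |‖b‖ - ‖a‖| / ‖a‖ := by
            field_simp
        _ ≤ ‖a - b‖ / ‖a‖ := by gcongr
        _ ≤ ‖a - b‖ / 1 := by gcongr
        _ = ‖a - b‖ := div_one _
    calc ‖‖a‖⁻¹ • (a - b) + (‖a‖⁻¹ - ‖b‖⁻¹) • b‖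
        ≤ ‖‖a‖⁻¹ • (a - b)‖ + ‖(‖a‖⁻¹ - ‖b‖⁻¹) • b‖ := norm_add_le _ _
      _ ≤ ‖a - b‖ + ‖a - b‖ := add_le_add h1 h2
      _ = (2:ℝ≥0) * ‖a - b‖ := by push_cast; ring
  -- the sphere is contained in the radial projection of the cube boundary
  have hScover : {w : E | ‖w‖ = 1} ⊆ (fun y : E => ‖y‖⁻¹ • y) '' B := by
    intro w hw
    have hw1 : ‖w‖ = 1 := hw
    obtain ⟨i₀, -, hmax⟩ := Finset.exists_max_image Finset.univ (fun i => |w i|)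
      ⟨0, Finset.mem_univ 0⟩
    have ht0 : 0 < |w i₀| := by
      rcases (abs_nonneg (w i₀)).lt_or_eq with h | h
      · exact h
      · exfalso
        have : w = 0 := by
          ext j
          have := hmax j (Finset.mem_univ j)
          have : |w j| ≤ 0 := le_trans this h.symm.le
          simpa using le_antisymm this (abs_nonneg _)
        rw [this] at hw1; simp at hw1
    set t := |w i₀| with htdef
    refine ⟨t⁻¹ • w, ⟨fun j => ?_, ⟨i₀, ?_⟩⟩, ?_⟩
    · have : (t⁻¹ • w) j = t⁻¹ * w j := rfl
      rw [this, abs_mul, abs_of_pos (inv_pos.2 ht0)]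
      rw [inv_mul_le_iff₀ ht0, mul_one]
      exact hmax j (Finset.mem_univ j)
    · have : (t⁻¹ • w) i₀ = t⁻¹ * w i₀ := rfl
      rw [this, abs_mul, abs_of_pos (inv_pos.2 ht0), inv_mul_cancel₀ ht0.ne']
    · show ‖t⁻¹ • w‖⁻¹ • (t⁻¹ • w) = w
      have hnorm : ‖t⁻¹ • w‖ = t⁻¹ := by
        rw [norm_smul, Real.norm_eq_abs, abs_of_pos (inv_pos.2 ht0), hw1, mul_one]
      rw [hnorm, inv_inv, smul_smul, mul_inv_cancel₀ ht0.ne', one_smul]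
  -- assemble
  have hdnn : (0:ℝ) ≤ (m:ℝ) := Nat.cast_nonneg m
  have step1 : μH[(m:ℝ)] {w : E | ‖w‖ = 1} ≤ (2:ℝ≥0∞) ^ (m:ℝ) * μH[(m:ℝ)] B := by
    refine (measure_mono hScover).trans ?_
    have := (hproj.mono hBU).hausdorffMeasure_image_le hdnn
    simpa using this
  have step2 : μH[(m:ℝ)] B ≤ (K:ℝ≥0∞) ^ (m:ℝ) *
      μH[(m:ℝ)] {y : Fin (m+1) → ℝ | (∀ j, |y j| ≤ 1) ∧ ∃ i, |y i| = 1} := by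
    have hBimg : B = T '' {y : Fin (m+1) → ℝ | (∀ j, |y j| ≤ 1) ∧ ∃ i, |y i| = 1} := by
      ext y
      constructor
      · rintro ⟨h1, h2⟩
        exact ⟨WithLp.equiv 2 (Fin (m+1) → ℝ) y, ⟨h1, h2⟩, by simp [hT]⟩
      · rintro ⟨v, ⟨h1, h2⟩, rfl⟩
        exact ⟨h1, h2⟩
    rw [hBimg]
    exact hK.hausdorffMeasure_image_le hdnn _
  refine lt_of_le_of_lt step1 ?_
  refine ENNReal.mul_lt_top (ENNReal.rpow_lt_top_of_nonneg hdnn (by norm_num)) ?_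
  refine lt_of_le_of_lt step2 ?_
  exact ENNReal.mul_lt_top (ENNReal.rpow_lt_top_of_nonneg hdnn ENNReal.coe_ne_top)
    (boundary_finite m)


lemma cap_pos (m : ℕ) :
    0 < μH[(m:ℝ)] {w : EuclideanSpace ℝ (Fin (m+1)) | ‖w‖ = 1 ∧ 1/2 ≤ w 0} := by
  classical
  set E := EuclideanSpace ℝ (Fin (m+1))
  set c : ℝ := 1/(2*(m+1)) with hc
  have hc0 : 0 < c := by positivity
  set ψ : E → (Fin m → ℝ) := fun w j => w j.succ with hψ
  have hψlip : LipschitzWith 1 ψ := by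
    apply LipschitzWith.of_dist_le_mul
    intro a b
    rw [NNReal.coe_one, one_mul, dist_pi_le_iff dist_nonneg]
    intro j
    rw [Real.dist_eq]
    calc |a j.succ - b j.succ| = |(a - b) j.succ| := by
          congr 1
      _ ≤ ‖a - b‖ := coord_le_norm (a - b) _
      _ = dist a b := (dist_eq_norm a b).symm
  have hcube : (Set.pi Set.univ fun _ : Fin m => Set.Icc (-c) c) ⊆
      ψ '' {w : E | ‖w‖ = 1 ∧ 1/2 ≤ w 0} := by
    intro v hv
    set s : ℝ := ∑ j, (v j)^2 with hs
    have hsle : s ≤ 3/4 := by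
      have h1 : ∀ j, (v j)^2 ≤ c^2 := by
        intro j
        have := hv j (Set.mem_univ j)
        exact sq_le_sq' this.1 this.2
      have h2 : s ≤ (m:ℝ) * c^2 := by
        calc s ≤ ∑ _j : Fin m, c^2 := Finset.sum_le_sum fun j _ => h1 j
          _ = (m:ℝ) * c^2 := by simp [Finset.sum_const, nsmul_eq_mul]
      have h3 : (m:ℝ) * c^2 ≤ 3/4 := by
        rw [hc, div_pow, one_pow, mul_one_div, div_le_iff₀ (by positivity)]
        nlinarith [Nat.cast_nonneg (α := ℝ) m]
      linarith
    have hs0 : 0 ≤ s := Finset.sum_nonneg fun j _ => sq_nonneg _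
    have h1s : (1:ℝ)/4 ≤ 1 - s := by linarith
    set w : E := WithLp.toLp 2 (Fin.cons (Real.sqrt (1 - s)) v : Fin (m+1) → ℝ) with hw
    have hw0 : w 0 = Real.sqrt (1 - s) := rfl
    have hwsucc : ∀ j : Fin m, w j.succ = v j := by
      intro j
      rw [hw]
      exact Fin.cons_succ (α := fun _ : Fin (m+1) => ℝ) (Real.sqrt (1 - s)) v j
    refine ⟨w, ⟨?_, ?_⟩, ?_⟩
    · rw [EuclideanSpace.norm_eq]
      have hsum : ∑ k, ‖w k‖^2 = (1 - s) + s := by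
        rw [Fin.sum_univ_succ]
        congr 1
        · rw [hw0, Real.norm_eq_abs, sq_abs, Real.sq_sqrt (by linarith)]
        · rw [hs]
          refine Finset.sum_congr rfl fun j _ => ?_
          rw [hwsucc j, Real.norm_eq_abs, sq_abs]
      rw [hsum]
      simp
    · rw [hw0]
      have : Real.sqrt (1/4) ≤ Real.sqrt (1 - s) := Real.sqrt_le_sqrt h1s
      calc (1:ℝ)/2 = Real.sqrt (1/4) := by
            rw [show (1/4:ℝ) = (1/2)^2 by norm_num, Real.sqrt_sq (by norm_num)]
        _ ≤ _ := this
    · funext j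
      exact hwsucc j
  have hpi : (μH[(m:ℝ)] : Measure (Fin m → ℝ)) = volume := by
    have := hausdorffMeasure_pi_real (ι := Fin m)
    simpa using this
  have hvol : 0 < μH[(m:ℝ)] (Set.pi Set.univ fun _ : Fin m => Set.Icc (-c) c) := by
    rw [hpi, volume_pi_pi]
    have : volume (Set.Icc (-c) c) = ENNReal.ofReal (2*c) := by
      rw [Real.volume_Icc]; ring_nf
    rw [this]
    simp only [Finset.prod_const, Finset.card_univ, Fintype.card_fin]
    have hne : ENNReal.ofReal (2*c) ≠ 0 := (ENNReal.ofReal_pos.2 (by linarith)).ne'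
    exact pos_iff_ne_zero.2 (pow_ne_zero m hne)
  have himg : μH[(m:ℝ)] (ψ '' {w : E | ‖w‖ = 1 ∧ 1/2 ≤ w 0}) ≤
      μH[(m:ℝ)] {w : E | ‖w‖ = 1 ∧ 1/2 ≤ w 0} := by
    have := hψlip.hausdorffMeasure_image_le (Nat.cast_nonneg m : (0:ℝ) ≤ m)
      {w : E | ‖w‖ = 1 ∧ 1/2 ≤ w 0}
    simpa using this
  calc (0:ℝ≥0∞) < μH[(m:ℝ)] (Set.pi Set.univ fun _ : Fin m => Set.Icc (-c) c) := hvol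
    _ ≤ μH[(m:ℝ)] (ψ '' {w : E | ‖w‖ = 1 ∧ 1/2 ≤ w 0}) := measure_mono hcube
    _ ≤ _ := himg


lemma cap_measure_eq (m : ℕ) {u : EuclideanSpace ℝ (Fin (m+1))} (hu : ‖u‖ = 1) :
    μH[(m:ℝ)] {w : EuclideanSpace ℝ (Fin (m+1)) | ‖w‖ = 1 ∧ 1/2 ≤ (inner ℝ w u : ℝ)} =
    μH[(m:ℝ)] {w : EuclideanSpace ℝ (Fin (m+1)) | ‖w‖ = 1 ∧ 1/2 ≤ w 0} := by
  set e₀ : EuclideanSpace ℝ (Fin (m+1)) := EuclideanSpace.single 0 1 with he₀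
  have he₀n : ‖e₀‖ = 1 := by rw [he₀, EuclideanSpace.norm_single]; norm_num
  set A : EuclideanSpace ℝ (Fin (m+1)) ≃ₗᵢ[ℝ] EuclideanSpace ℝ (Fin (m+1)) :=
    (ℝ ∙ (e₀ - u))ᗮ.reflection with hA
  have hAe₀ : A e₀ = u := Submodule.reflection_sub (by rw [he₀n, hu])
  have hinner : ∀ w : EuclideanSpace ℝ (Fin (m+1)), (inner ℝ (A w) u : ℝ) = w 0 := by
    intro w
    rw [← hAe₀, A.inner_map_map, he₀]
    simp [EuclideanSpace.inner_single_right]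
  have himg : {w : EuclideanSpace ℝ (Fin (m+1)) | ‖w‖ = 1 ∧ 1/2 ≤ (inner ℝ w u : ℝ)} =
      A.toIsometryEquiv '' {w : EuclideanSpace ℝ (Fin (m+1)) | ‖w‖ = 1 ∧ 1/2 ≤ w 0} := by
    ext z
    constructor
    · rintro ⟨hz1, hz2⟩
      refine ⟨A.symm z, ⟨by simp [hz1], ?_⟩, by simp⟩
      rw [← hinner (A.symm z)]
      simpa using hz2
    · rintro ⟨w, ⟨hw1, hw2⟩, rfl⟩
      refine ⟨by simp [hw1], ?_⟩
      rw [show (A.toIsometryEquiv w : EuclideanSpace ℝ (Fin (m+1))) = A w from rfl, hinner w]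
      exact hw2
  rw [himg, IsometryEquiv.hausdorffMeasure_image]

lemma scaling_measure (m : ℕ) {R : ℝ} (hR : 0 < R) :
    (μH[(m:ℝ)] : Measure (EuclideanSpace ℝ (Fin (m+1)))) =
      (ENNReal.ofReal (R^m)) •
        Measure.map (fun w : EuclideanSpace ℝ (Fin (m+1)) => R • w) μH[(m:ℝ)] := by
  ext s hs
  rw [Measure.smul_apply, Measure.map_apply (continuous_const_smul R).measurable hs]
  have hpre : (fun w : EuclideanSpace ℝ (Fin (m+1)) => R • w) ⁻¹' s = R⁻¹ • s := by
    ext w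
    rw [Set.mem_inv_smul_set_iff₀ hR.ne']
    rfl
  rw [hpre, MeasureTheory.Measure.hausdorffMeasure_smul₀ (Nat.cast_nonneg m)
    (inv_ne_zero hR.ne') s]
  rw [smul_eq_mul, ENNReal.smul_def, smul_eq_mul, ← mul_assoc]
  have hcoef : ENNReal.ofReal (R ^ m) * ((‖(R⁻¹ : ℝ)‖₊ ^ ((m:ℕ):ℝ) : ℝ≥0) : ℝ≥0∞) = 1 := by
    rw [ENNReal.coe_rpow_of_nonneg _ (Nat.cast_nonneg m)]
    rw [← enorm_eq_nnnorm, Real.enorm_eq_ofReal (inv_nonneg.2 hR.le)]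
    rw [ENNReal.rpow_natCast, ← ENNReal.ofReal_pow (inv_nonneg.2 hR.le),
      ← ENNReal.ofReal_mul (by positivity)]
    rw [← mul_pow, mul_inv_cancel₀ hR.ne', one_pow, ENNReal.ofReal_one]
  rw [hcoef, one_mul]

end Stmt17Aux


open Stmt17Aux in
/-- Lower bound for the sphere average: with `π(x,y) = ½(|x−y|² − R²)` and
`f = (4R)^{−n} χ_{[−2R,2R]ⁿ}`, there is a constant `C_n` depending only on `n` such that
for any `ω₁,…,ω_n ∈ ℝⁿ` and any `x ∈ [−R,R)ⁿ`,
`∑ᵢ ‖ωᵢ‖ ≤ C_n R ∫_{|x−y|=R} f(y) (∑ᵢ |(x−y)·ωᵢ|²)^{1/2} dH^{n−1}(y)/R`. -/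
theorem stmt17 (n : ℕ) (hn : 1 ≤ n) :
    ∃ C : ℝ, 0 < C ∧
      ∀ (R : ℝ), 0 < R →
        ∀ (x : EuclideanSpace ℝ (Fin n)) (ω : Fin n → EuclideanSpace ℝ (Fin n)),
          (∀ i, x i ∈ Set.Ico (-R) R) →
          ∑ i, ‖ω i‖ ≤
            C * R *
              ∫ y in {y : EuclideanSpace ℝ (Fin n) | ‖x - y‖ = R},
                (Set.indicator
                    {y : EuclideanSpace ℝ (Fin n) | ∀ i, y i ∈ Set.Icc (-(2 * R)) (2 * R)}
                    (fun _ => ((4 * R) ^ n)⁻¹) y) *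
                  Real.sqrt (∑ i, (inner ℝ (x - y) (ω i) : ℝ) ^ 2) / R
              ∂(Measure.hausdorffMeasure ((n : ℝ) - 1)) := by
  classical
  obtain ⟨m, rfl⟩ : ∃ m, n = m + 1 := ⟨n - 1, (Nat.succ_pred_eq_of_pos hn).symm⟩
  clear hn
  have hcast : ((m + 1 : ℕ) : ℝ) - 1 = (m : ℝ) := by push_cast; ring
  set cap : Set (EuclideanSpace ℝ (Fin (m+1))) :=
    {w : EuclideanSpace ℝ (Fin (m+1)) | ‖w‖ = 1 ∧ 1/2 ≤ w 0} with hcapdef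
  set κ : ℝ := (μH[(m:ℝ)] cap).toReal with hκdef
  have hcapS : cap ⊆ {w : EuclideanSpace ℝ (Fin (m+1)) | ‖w‖ = 1} := fun w hw => hw.1
  have hcapfin : μH[(m:ℝ)] cap < ⊤ :=
    lt_of_le_of_lt (measure_mono hcapS) (sphere_finite m)
  have hκpos : 0 < κ := ENNReal.toReal_pos (cap_pos m).ne' hcapfin.ne
  refine ⟨2*(m+1)*4^(m+1)/κ, by positivity, ?_⟩
  intro R hR x ω hx
  rw [hcast]
  set S₁ : Set (EuclideanSpace ℝ (Fin (m+1))) :=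
    {w : EuclideanSpace ℝ (Fin (m+1)) | ‖w‖ = 1} with hS₁def
  set SR : Set (EuclideanSpace ℝ (Fin (m+1))) :=
    {z : EuclideanSpace ℝ (Fin (m+1)) | ‖z‖ = R} with hSRdef
  set T : Set (EuclideanSpace ℝ (Fin (m+1))) :=
    {y : EuclideanSpace ℝ (Fin (m+1)) | ‖x - y‖ = R} with hTdef
  have hS₁m : MeasurableSet S₁ := (isClosed_eq continuous_norm continuous_const).measurableSet
  have hSRm : MeasurableSet SR := (isClosed_eq continuous_norm continuous_const).measurableSet
  have hTm : MeasurableSet T :=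
    (isClosed_eq ((continuous_const.sub continuous_id).norm) continuous_const).measurableSet
  set g : EuclideanSpace ℝ (Fin (m+1)) → ℝ :=
    fun z => Real.sqrt (∑ i, (inner ℝ z (ω i) : ℝ) ^ 2) with hgdef
  have hgc : Continuous g := by
    apply Real.continuous_sqrt.comp
    exact continuous_finset_sum _ fun i _ =>
      ((continuous_id.inner continuous_const)).pow 2
  have hgnn : ∀ z, 0 ≤ g z := fun z => Real.sqrt_nonneg _
  set J : ℝ := ∫ w in S₁, g w ∂μH[(m:ℝ)] with hJdef
  have hJ0 : 0 ≤ J := integral_nonneg fun w => hgnn w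
  haveI hfin : IsFiniteMeasure ((μH[(m:ℝ)] :
      Measure (EuclideanSpace ℝ (Fin (m+1)))).restrict S₁) :=
    ⟨by rw [Measure.restrict_apply_univ]; exact sphere_finite m⟩
  -- integrability of g on the unit sphere
  have hgint : Integrable g ((μH[(m:ℝ)] :
      Measure (EuclideanSpace ℝ (Fin (m+1)))).restrict S₁) := by
    refine Integrable.mono' (integrable_const (Real.sqrt (∑ i, ‖ω i‖^2)))
      hgc.aestronglyMeasurable ?_
    filter_upwards [ae_restrict_mem hS₁m] with w hw
    rw [Real.norm_eq_abs, abs_of_nonneg (hgnn w)]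
    apply Real.sqrt_le_sqrt
    refine Finset.sum_le_sum fun i _ => ?_
    have h1 : |(inner ℝ w (ω i) : ℝ)| ≤ ‖w‖ * ‖ω i‖ := abs_real_inner_le_norm w (ω i)
    have hw1 : ‖w‖ = 1 := hw
    rw [hw1, one_mul] at h1
    calc (inner ℝ w (ω i) : ℝ)^2 = |(inner ℝ w (ω i) : ℝ)|^2 := (sq_abs _).symm
      _ ≤ ‖ω i‖^2 := by nlinarith [abs_nonneg (inner ℝ w (ω i) : ℝ)]
  -- key lower bound : each ‖ω i‖ is controlled by J
  have hkey : ∀ i, ‖ω i‖ ≤ 2/κ * J := by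
    intro i
    rcases eq_or_ne (ω i) 0 with h0 | h0
    · rw [h0, norm_zero]; positivity
    · have hωpos : 0 < ‖ω i‖ := norm_pos_iff.2 h0
      set u : EuclideanSpace ℝ (Fin (m+1)) := ‖ω i‖⁻¹ • ω i with hudef
      have hu : ‖u‖ = 1 := by
        rw [hudef, norm_smul, Real.norm_eq_abs, abs_of_pos (inv_pos.2 hωpos),
          inv_mul_cancel₀ hωpos.ne']
      set capu : Set (EuclideanSpace ℝ (Fin (m+1))) :=
        {w : EuclideanSpace ℝ (Fin (m+1)) | ‖w‖ = 1 ∧ 1/2 ≤ (inner ℝ w u : ℝ)} with hcapudef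
      have hcapum : MeasurableSet capu := by
        apply IsClosed.measurableSet
        have hci : Continuous fun w : EuclideanSpace ℝ (Fin (m+1)) => (inner ℝ w u : ℝ) :=
          continuous_id.inner continuous_const
        exact (isClosed_eq continuous_norm continuous_const).inter
          (isClosed_le continuous_const hci)
      have hcapuS : capu ⊆ S₁ := fun w hw => hw.1
      have hpt : ∀ w, Set.indicator capu (fun _ => ‖ω i‖/2) w ≤ g w := by
        intro w
        by_cases hw : w ∈ capu
        · rw [Set.indicator_of_mem hw]
          have hrw : (inner ℝ w (ω i) : ℝ) = ‖ω i‖ * (inner ℝ w u : ℝ) := by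
            rw [hudef, real_inner_smul_right]
            field_simp
          have h1 : ‖ω i‖/2 ≤ (inner ℝ w (ω i) : ℝ) := by
            rw [hrw]
            have := hw.2
            nlinarith
          have h2 : (inner ℝ w (ω i) : ℝ)^2 ≤ ∑ j, (inner ℝ w (ω j) : ℝ)^2 :=
            Finset.single_le_sum (f := fun j => (inner ℝ w (ω j) : ℝ)^2)
              (fun j _ => sq_nonneg _) (Finset.mem_univ i)
          calc ‖ω i‖/2 ≤ (inner ℝ w (ω i) : ℝ) := h1
            _ ≤ |(inner ℝ w (ω i) : ℝ)| := le_abs_self _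
            _ = Real.sqrt ((inner ℝ w (ω i) : ℝ)^2) := (Real.sqrt_sq_eq_abs _).symm
            _ ≤ g w := Real.sqrt_le_sqrt h2
        · rw [Set.indicator_of_notMem hw]
          exact hgnn w
      have hindint : Integrable (Set.indicator capu fun _ => ‖ω i‖/2)
          ((μH[(m:ℝ)] : Measure (EuclideanSpace ℝ (Fin (m+1)))).restrict S₁) :=
        (integrable_const _).indicator hcapum
      have hmono : ∫ w in S₁, Set.indicator capu (fun _ => ‖ω i‖/2) w ∂μH[(m:ℝ)] ≤ J :=
        integral_mono hindint hgint hpt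
      rw [integral_indicator_const _ hcapum] at hmono
      have hres : ((μH[(m:ℝ)] : Measure (EuclideanSpace ℝ (Fin (m+1)))).restrict S₁) capu
          = μH[(m:ℝ)] capu := by
        rw [Measure.restrict_apply hcapum, Set.inter_eq_self_of_subset_left hcapuS]
      rw [measureReal_def, hres, cap_measure_eq m hu] at hmono
      rw [smul_eq_mul] at hmono
      -- hmono : κ * (‖ω i‖ / 2) ≤ J
      rw [div_mul_eq_mul_div, le_div_iff₀ hκpos]
      calc ‖ω i‖ * κ = 2 * (κ * (‖ω i‖/2)) := by ring
        _ ≤ 2 * J := by linarith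
  -- membership of sphere points in the box
  have hbox : ∀ y ∈ T, y ∈ {y : EuclideanSpace ℝ (Fin (m+1)) |
      ∀ i, y i ∈ Set.Icc (-(2*R)) (2*R)} := by
    intro y hy i
    have h1 : |x i| ≤ R := abs_le.2 ⟨(hx i).1, (hx i).2.le⟩
    have h2 : |x i - y i| ≤ R := by
      have hxy : (x - y) i = x i - y i := rfl
      rw [← hxy]
      calc |(x - y) i| ≤ ‖x - y‖ := coord_le_norm (x - y) i
        _ = R := hy
    obtain ⟨h1a, h1b⟩ := abs_le.mp h1
    obtain ⟨h2a, h2b⟩ := abs_le.mp h2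
    exact ⟨by linarith, by linarith⟩
  have e1 : (∫ y in T, (Set.indicator {y : EuclideanSpace ℝ (Fin (m+1)) |
        ∀ i, y i ∈ Set.Icc (-(2*R)) (2*R)} (fun _ => ((4*R)^(m+1))⁻¹) y) *
        Real.sqrt (∑ i, (inner ℝ (x - y) (ω i) : ℝ)^2) / R ∂μH[(m:ℝ)])
      = ((4*R)^(m+1))⁻¹ / R * ∫ y in T, g (x - y) ∂μH[(m:ℝ)] := by
    rw [← integral_const_mul]
    apply setIntegral_congr_fun hTm
    intro y hy
    beta_reduce
    rw [Set.indicator_of_mem (hbox y hy)]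
    simp only [hgdef]
    ring
  -- translation
  have hiso : Isometry (fun z : EuclideanSpace ℝ (Fin (m+1)) => x - z) := by
    apply Isometry.of_dist_eq
    intro a b
    rw [dist_eq_norm, dist_eq_norm, sub_sub_sub_cancel_left, norm_sub_rev]
  set e : EuclideanSpace ℝ (Fin (m+1)) ≃ᵢ EuclideanSpace ℝ (Fin (m+1)) :=
    ⟨Equiv.subLeft x, hiso⟩ with hedef
  have hecoe : ∀ z, e z = x - z := fun z => rfl
  have hTimg : T = ⇑e '' SR := by
    ext y
    constructor
    · intro hy
      exact ⟨x - y, hy, by rw [hecoe, sub_sub_cancel]⟩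
    · rintro ⟨z, hz, rfl⟩
      show ‖x - e z‖ = R
      rw [hecoe, sub_sub_cancel]
      exact hz
  have e2 : ∫ y in T, g (x - y) ∂μH[(m:ℝ)] = ∫ z in SR, g z ∂μH[(m:ℝ)] := by
    rw [hTimg, (e.measurePreserving_hausdorffMeasure (m:ℝ)).setIntegral_image_emb
      e.toHomeomorph.measurableEmbedding (fun y => g (x - y)) SR]
    apply setIntegral_congr_fun hSRm
    intro z hz
    show g (x - e z) = g z
    rw [hecoe, sub_sub_cancel]
  -- scaling
  have hemb : MeasurableEmbedding (fun w : EuclideanSpace ℝ (Fin (m+1)) => R • w) :=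
    (Homeomorph.smulOfNeZero R hR.ne').measurableEmbedding
  have hpreSR : (fun w : EuclideanSpace ℝ (Fin (m+1)) => R • w) ⁻¹' SR = S₁ := by
    ext w
    show ‖R • w‖ = R ↔ ‖w‖ = 1
    rw [norm_smul, Real.norm_eq_abs, abs_of_pos hR]
    constructor
    · intro h
      have := mul_left_cancel₀ hR.ne' (h.trans (mul_one R).symm)
      exact this
    · intro h; rw [h, mul_one]
  have hg_smul : ∀ w, g (R • w) = R * g w := by
    intro w
    simp only [hgdef]
    have hsum : ∑ i, (inner ℝ (R • w) (ω i) : ℝ)^2 = R^2 * ∑ i, (inner ℝ w (ω i) : ℝ)^2 := by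
      rw [Finset.mul_sum]
      refine Finset.sum_congr rfl fun i _ => ?_
      rw [real_inner_smul_left]; ring
    rw [hsum, Real.sqrt_mul (sq_nonneg R), Real.sqrt_sq hR.le]
  have e3 : ∫ z in SR, g z ∂μH[(m:ℝ)] = R^m * (R * J) := by
    calc ∫ z in SR, g z ∂(μH[(m:ℝ)] : Measure (EuclideanSpace ℝ (Fin (m+1))))
        = ∫ z in SR, g z ∂((ENNReal.ofReal (R^m)) • Measure.map
            (fun w : EuclideanSpace ℝ (Fin (m+1)) => R • w) μH[(m:ℝ)]) := by
          rw [← scaling_measure m hR]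
      _ = (ENNReal.ofReal (R^m)).toReal • ∫ z in SR, g z ∂(Measure.map
            (fun w : EuclideanSpace ℝ (Fin (m+1)) => R • w) μH[(m:ℝ)]) := by
          rw [Measure.restrict_smul, integral_smul_measure]
      _ = R^m * ∫ w in S₁, g (R • w) ∂μH[(m:ℝ)] := by
          rw [hemb.setIntegral_map, hpreSR, ENNReal.toReal_ofReal (by positivity), smul_eq_mul]
      _ = R^m * (R * J) := by
          congr 1
          rw [hJdef, ← integral_const_mul]
          apply setIntegral_congr_fun hS₁m
          intro w _
          exact hg_smul w
  rw [e1, e2, e3]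
  have h4 : (4:ℝ)^(m+1) ≠ 0 := by positivity
  have hRne : R ≠ 0 := hR.ne'
  have hκne : κ ≠ 0 := hκpos.ne'
  have hRm1 : (4*R)^(m+1) ≠ 0 := by positivity
  have hfinal : 2*(m+1)*4^(m+1)/κ * R * (((4*R)^(m+1))⁻¹ / R * (R^m * (R * J)))
      = (m+1) * (2/κ * J) := by
    rw [mul_pow]
    field_simp
    ring
  rw [hfinal]
  calc ∑ i, ‖ω i‖ ≤ ∑ _i : Fin (m+1), 2/κ * J := Finset.sum_le_sum fun i _ => hkey i
    _ = (m+1) * (2/κ * J) := by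
        rw [Finset.sum_const, Finset.card_univ, Fintype.card_fin, nsmul_eq_mul]
        push_cast
        ring
end
end
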